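/- Let β₁ > 0 be the unique positive real number satisfying ∑_{k=1}^∞ (k+1)² e^{−β₁√(k(k+2))} = 1, and define β = β₁ + (∑_{k=1}^∞ (k+1)² log(k+1) e^{−β₁√(k(k+2))}) / (∑_{k=1}^∞ (k+1)² √(k(k+2)) e^{−β₁√(k(k+2))}). Then 1.5957 < β < 1.5958. -/

import Mathlib

set_option maxHeartbeats 3200000


/-- The LQG area eigenvalue `E_k = √(k(k+2))` for spin `k/2`. -/
noncomputable def Ek (k : ℕ+) : ℝ :=
  Real.sqrt (((k : ℕ) : ℝ) * (((k : ℕ) : ℝ) + 2))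

open Real Finset

noncomputable def PL (t : ℝ) : ℝ := 1 + t + t^2/2 + t^3/6 + t^4/24 + t^5/120 + t^6/720
noncomputable def PU (t : ℝ) : ℝ := PL t + t^7/630

lemma sum7 (t : ℝ) : ∑ i ∈ range 7, t ^ i / (Nat.factorial i : ℝ) = PL t := by
  simp [Finset.sum_range_succ, PL, Nat.factorial]

lemma PL_le_exp {t : ℝ} (ht : 0 ≤ t) : PL t ≤ Real.exp t := by
  have h := Real.sum_le_exp_of_nonneg ht 7
  rw [sum7] at h; exact h

lemma exp_le_PU {t : ℝ} (h0 : 0 ≤ t) (h1 : t ≤ 1) : Real.exp t ≤ PU t := by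
  have h := Real.exp_bound' h0 h1 (n := 7) (by norm_num)
  rw [sum7] at h
  have h2 : t ^ 7 * ((7:ℕ) + 1) / ((Nat.factorial 7 : ℝ) * 7) ≤ t^7/630 := by
    have := pow_nonneg h0 7
    norm_num [Nat.factorial]
    nlinarith
  unfold PU
  calc Real.exp t ≤ PL t + t ^ 7 * ((7:ℕ)+1) / ((Nat.factorial 7:ℝ) * 7) := h
    _ ≤ PL t + t^7/630 := by linarith

lemma one_le_PL {t : ℝ} (ht : 0 ≤ t) : 1 ≤ PL t := by
  unfold PL
  nlinarith [pow_nonneg ht 2, pow_nonneg ht 3, pow_nonneg ht 4, pow_nonneg ht 5, pow_nonneg ht 6]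

lemma exp_neg_le (c l E r : ℝ) (hc : 0 < c) (hl : 0 ≤ l) (hlE : l ≤ E)
    (h : 1 ≤ r * PL (c * l / 32) ^ 32) : Real.exp (-(c * E)) ≤ r := by
  have ht : (0:ℝ) ≤ c * l / 32 := by positivity
  have hPL := PL_le_exp ht
  have hPLpos : (0:ℝ) < PL (c * l / 32) := lt_of_lt_of_le one_pos (one_le_PL ht)
  have hexp : PL (c * l / 32) ^ 32 ≤ Real.exp (c * l) := by
    calc PL (c * l / 32) ^ 32 ≤ Real.exp (c * l / 32) ^ 32 :=
          pow_le_pow_left₀ hPLpos.le hPL 32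
      _ = Real.exp ((32:ℕ) * (c * l / 32)) := (Real.exp_nat_mul _ 32).symm
      _ = Real.exp (c * l) := by ring_nf
  have hr : Real.exp (-(c * l)) ≤ r := by
    rw [Real.exp_neg]
    have hPpos : (0:ℝ) < PL (c * l / 32) ^ 32 := by positivity
    have h2 : (Real.exp (c*l))⁻¹ ≤ (PL (c * l / 32) ^ 32)⁻¹ :=
      inv_anti₀ hPpos hexp
    calc (Real.exp (c*l))⁻¹ ≤ (PL (c * l / 32) ^ 32)⁻¹ := h2
      _ ≤ r := by
          rw [inv_le_iff_one_le_mul₀ hPpos]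
          linarith [h]
  calc Real.exp (-(c * E)) ≤ Real.exp (-(c * l)) := by
        apply Real.exp_le_exp.2; nlinarith
    _ ≤ r := hr

lemma le_exp_neg (c u E r : ℝ) (hc : 0 < c) (hr : 0 ≤ r) (hEu : E ≤ u) (hE : 0 ≤ E)
    (ht1 : c * u / 32 ≤ 1)
    (h : r * PU (c * u / 32) ^ 32 ≤ 1) : r ≤ Real.exp (-(c * E)) := by
  have hu : 0 ≤ u := le_trans hE hEu
  have ht : (0:ℝ) ≤ c * u / 32 := by positivity
  have hPU := exp_le_PU ht ht1
  have hexp : Real.exp (c * u) ≤ PU (c * u / 32) ^ 32 := by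
    calc Real.exp (c * u) = Real.exp ((32:ℕ) * (c * u / 32)) := by ring_nf
      _ = Real.exp (c * u / 32) ^ 32 := Real.exp_nat_mul _ 32
      _ ≤ PU (c * u / 32) ^ 32 := pow_le_pow_left₀ (Real.exp_pos _).le hPU 32
  have h1 : r ≤ Real.exp (-(c * u)) := by
    rw [Real.exp_neg, ← one_div, le_div_iff₀ (Real.exp_pos _)]
    calc r * Real.exp (c*u) ≤ r * PU (c * u / 32) ^ 32 := by
          apply mul_le_mul_of_nonneg_left hexp hr
      _ ≤ 1 := h
  calc r ≤ Real.exp (-(c * u)) := h1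
    _ ≤ Real.exp (-(c * E)) := by apply Real.exp_le_exp.2; nlinarith

lemma sqrt_lb {x l : ℝ} (hl : 0 ≤ l) (h : l^2 ≤ x) : l ≤ Real.sqrt x := by
  have hx : (0:ℝ) ≤ x := le_trans (by positivity) h
  nlinarith [Real.sq_sqrt hx, Real.sqrt_nonneg x]

lemma sqrt_ub {x u : ℝ} (hx : 0 ≤ x) (hu : 0 ≤ u) (h : x ≤ u^2) : Real.sqrt x ≤ u := by
  nlinarith [Real.sq_sqrt hx, Real.sqrt_nonneg x]

lemma log_le_of (m lam : ℝ) (hm : 0 < m) (hlam : 0 ≤ lam) (h : m ≤ PL (lam/32) ^ 32) :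
    Real.log m ≤ lam := by
  rw [Real.log_le_iff_le_exp hm]
  calc m ≤ PL (lam/32) ^ 32 := h
    _ ≤ Real.exp (lam/32) ^ 32 :=
        pow_le_pow_left₀ (le_trans zero_le_one (one_le_PL (by positivity))) (PL_le_exp (by positivity)) 32
    _ = Real.exp ((32:ℕ) * (lam/32)) := (Real.exp_nat_mul _ 32).symm
    _ = Real.exp lam := by ring_nf

lemma le_log_of (m lam : ℝ) (hm : 0 < m) (hlam : 0 ≤ lam) (h1 : lam/32 ≤ 1)
    (h : PU (lam/32) ^ 32 ≤ m) : lam ≤ Real.log m := by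
  rw [Real.le_log_iff_exp_le hm]
  calc Real.exp lam = Real.exp ((32:ℕ) * (lam/32)) := by ring_nf
    _ = Real.exp (lam/32) ^ 32 := Real.exp_nat_mul _ 32
    _ ≤ PU (lam/32) ^ 32 := pow_le_pow_left₀ (Real.exp_pos _).le (exp_le_PU (by positivity) h1) 32
    _ ≤ m := h

lemma Ek_nonneg (k : ℕ+) : 0 ≤ Ek k := Real.sqrt_nonneg _

lemma Ek_ge (k : ℕ+) : ((k : ℕ) : ℝ) ≤ Ek k := by
  have h0 : (0:ℝ) ≤ ((k:ℕ):ℝ) := by positivity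
  exact sqrt_lb h0 (by nlinarith)

lemma Ek_le (k : ℕ+) : Ek k ≤ ((k : ℕ) : ℝ) + 1 := by
  have h0 : (0:ℝ) ≤ ((k:ℕ):ℝ) := by positivity
  exact sqrt_ub (by positivity) (by positivity) (by nlinarith)

lemma summable_main (c : ℝ) (hc : 1 ≤ c) (w : ℕ+ → ℝ)
    (hw : ∀ k : ℕ+, |w k| ≤ (((k:ℕ):ℝ) + 1)^3) :
    Summable (fun k : ℕ+ => w k * Real.exp (-c * Ek k)) := by
  have hr0 : (0:ℝ) < Real.exp (-1) := Real.exp_pos _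
  have hr1 : Real.exp (-1) < 1 := by
    have h := Real.exp_lt_exp.2 (show (-1:ℝ) < 0 by norm_num)
    rwa [Real.exp_zero] at h
  have base : Summable (fun n : ℕ => ((n:ℝ))^3 * Real.exp (-1) ^ n) :=
    summable_pow_mul_geometric_of_norm_lt_one 3
      (by rw [Real.norm_eq_abs, abs_of_pos hr0]; exact hr1)
  have sh : Summable (fun n : ℕ => (((n+2:ℕ)):ℝ)^3 * Real.exp (-1) ^ (n+2)) :=
    (summable_nat_add_iff 2).2 base
  have g : Summable (fun n : ℕ => (3:ℝ) * ((((n+2:ℕ)):ℝ)^3 * Real.exp (-1) ^ (n+2))) :=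
    sh.mul_left 3
  rw [← Equiv.summable_iff Equiv.pnatEquivNat.symm]
  apply Summable.of_norm_bounded g
  intro n
  simp only [Function.comp_apply, Equiv.pnatEquivNat_symm_apply]
  have hk : (((n.succPNat : ℕ+) : ℕ) : ℝ) = (n:ℝ) + 1 := by
    rw [Nat.succPNat_coe]; push_cast; ring
  have hE : ((n:ℝ) + 1) ≤ Ek n.succPNat := by rw [← hk]; exact Ek_ge _
  have hE0 : 0 ≤ Ek n.succPNat := Ek_nonneg _
  have hexp1 : Real.exp (-c * Ek n.succPNat) ≤ Real.exp (-((n:ℝ)+1)) := by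
    apply Real.exp_le_exp.2
    nlinarith
  have e2 : Real.exp (-((n:ℝ)+1)) = Real.exp 1 * Real.exp (-1) ^ (n+2) := by
    rw [← Real.exp_nat_mul, ← Real.exp_add]; congr 1; push_cast; ring
  have e3 : Real.exp 1 ≤ 3 := by
    have := Real.exp_one_lt_d9; linarith
  have hwk := hw n.succPNat
  rw [hk] at hwk
  rw [norm_mul, Real.norm_eq_abs, Real.norm_eq_abs, abs_of_pos (Real.exp_pos _)]
  have hp2 : (0:ℝ) ≤ Real.exp (-1) ^ (n+2) := by positivity
  calc |w n.succPNat| * Real.exp (-c * Ek n.succPNat)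
      ≤ ((n:ℝ)+1+1)^3 * Real.exp (-((n:ℝ)+1)) := by
        apply mul_le_mul hwk hexp1 (Real.exp_pos _).le (by positivity)
    _ = ((n:ℝ)+1+1)^3 * (Real.exp 1 * Real.exp (-1) ^ (n+2)) := by rw [e2]
    _ ≤ ((n:ℝ)+1+1)^3 * (3 * Real.exp (-1) ^ (n+2)) := by
        apply mul_le_mul_of_nonneg_left (mul_le_mul_of_nonneg_right e3 hp2) (by positivity)
    _ = 3 * ((((n+2:ℕ)):ℝ)^3 * Real.exp (-1) ^ (n+2)) := by push_cast; ring

lemma tsum_mono_general (w : ℕ+ → ℝ) (hw : ∀ k, 0 ≤ w k) {c d : ℝ} (hcd : c ≤ d)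
    (hsc : Summable (fun k : ℕ+ => w k * Real.exp (-c * Ek k))) :
    (∑' k : ℕ+, w k * Real.exp (-d * Ek k)) ≤ ∑' k : ℕ+, w k * Real.exp (-c * Ek k) := by
  have hterm : ∀ k : ℕ+, w k * Real.exp (-d * Ek k) ≤ w k * Real.exp (-c * Ek k) := fun k =>
    mul_le_mul_of_nonneg_left (Real.exp_le_exp.2 (by nlinarith [Ek_nonneg k])) (hw k)
  exact Summable.tsum_le_tsum hterm
    (Summable.of_nonneg_of_le (fun k => mul_nonneg (hw k) (Real.exp_pos _).le) hterm hsc) hsc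

lemma pnat_decomp (F : ℕ+ → ℝ) (h : Summable F) :
    ∑' k : ℕ+, F k =
      (∑ i ∈ Finset.range 18, F (Nat.succPNat i)) + ∑' n : ℕ, F (Nat.succPNat (n + 18)) := by
  have h' : Summable (fun n : ℕ => F (Nat.succPNat n)) := by
    have := (Equiv.summable_iff Equiv.pnatEquivNat.symm).2 h
    simpa [Function.comp_def, Equiv.pnatEquivNat_symm_apply] using this
  have e : (∑' n : ℕ, F (Nat.succPNat n)) = ∑' k : ℕ+, F k := by
    have := Equiv.pnatEquivNat.symm.tsum_eq F
    simpa [Equiv.pnatEquivNat_symm_apply] using this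
  rw [← e, ← Summable.sum_add_tsum_nat_add 18 h']


lemma RT_lemma : Real.exp (-(613163/500000 * 19)) ≤ (9504364581507451/125000000000000000000000000 : ℝ) :=
  exp_neg_le _ 19 _ _ (by norm_num) (by norm_num) (le_refl _) (by unfold PL; norm_num)

lemma tail_le (c : ℝ) (hc : (613163/500000 : ℝ) ≤ c) (w : ℕ+ → ℝ)
    (hw : ∀ k : ℕ+, 0 ≤ w k) (hw3 : ∀ k : ℕ+, w k ≤ (((k:ℕ):ℝ) + 1)^3)
    (hs : Summable (fun n : ℕ => w (Nat.succPNat (n + 18)) * Real.exp (-c * Ek (Nat.succPNat (n + 18))))) :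
    (∑' n : ℕ, w (Nat.succPNat (n + 18)) * Real.exp (-c * Ek (Nat.succPNat (n + 18)))) ≤ (1216559/1000000000000 : ℝ) := by
  have hA : (0:ℝ) < 613163/500000 := by norm_num
  have key : ∀ n : ℕ, w (Nat.succPNat (n + 18)) * Real.exp (-c * Ek (Nat.succPNat (n + 18)))
      ≤ (8000 * (9504364581507451/125000000000000000000000000 : ℝ)) * (1/2)^n := by
    intro n
    have hk : (((Nat.succPNat (n + 18) : ℕ+) : ℕ) : ℝ) = (n:ℝ) + 19 := by
      rw [Nat.succPNat_coe]; push_cast; ring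
    have hEk : ((n:ℝ) + 19) ≤ Ek (Nat.succPNat (n + 18)) := by rw [← hk]; exact Ek_ge _
    have hE0 : 0 ≤ Ek (Nat.succPNat (n + 18)) := Ek_nonneg _
    have e1 : Real.exp (-c * Ek (Nat.succPNat (n + 18))) ≤ Real.exp (-(613163/500000 * ((n:ℝ) + 19))) := by
      apply Real.exp_le_exp.2
      have h2 : (613163/500000 : ℝ) * ((n:ℝ)+19) ≤ c * Ek (Nat.succPNat (n + 18)) :=
        mul_le_mul hc hEk (by positivity) (le_trans hA.le hc)
      linarith
    have e2 : Real.exp (-((613163/500000:ℝ) * ((n:ℝ) + 19)))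
        = Real.exp (-(613163/500000 * 19)) * Real.exp (-(613163/500000:ℝ)) ^ n := by
      rw [← Real.exp_nat_mul, ← Real.exp_add]; congr 1; ring
    have w1 : w (Nat.succPNat (n + 18)) ≤ ((n:ℝ) + 19 + 1)^3 := by
      have := hw3 (Nat.succPNat (n + 18)); rwa [hk] at this
    have w2 : ((n:ℝ) + 19 + 1)^3 ≤ 8000 * Real.exp ((3:ℝ)/20) ^ n := by
      have ha1 : (n:ℝ)/20 + 1 ≤ Real.exp ((n:ℝ)/20) := Real.add_one_le_exp _
      have h20 : ((n:ℝ) + 19 + 1) = 20 * ((n:ℝ)/20 + 1) := by ring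
      have hpos : (0:ℝ) ≤ (n:ℝ)/20 + 1 := by positivity
      have hcube : ((n:ℝ)/20 + 1)^3 ≤ Real.exp ((n:ℝ)/20)^3 := by
        apply pow_le_pow_left₀ hpos ha1
      have he : Real.exp ((n:ℝ)/20)^3 = Real.exp ((3:ℝ)/20) ^ n := by
        rw [← Real.exp_nat_mul, ← Real.exp_nat_mul]; congr 1; push_cast; ring
      calc ((n:ℝ) + 19 + 1)^3 = 8000 * ((n:ℝ)/20 + 1)^3 := by rw [h20]; ring
        _ ≤ 8000 * Real.exp ((n:ℝ)/20)^3 := by linarith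
        _ = 8000 * Real.exp ((3:ℝ)/20) ^ n := by rw [he]
    have c1 : Real.exp ((3:ℝ)/20) * Real.exp (-(613163/500000:ℝ)) ≤ 1/2 := by
      have h2e : (2:ℝ) ≤ Real.exp ((613163/500000:ℝ) - 3/20) := by
        have := Real.add_one_le_exp ((613163/500000:ℝ) - 3/20); linarith [this]
      have : Real.exp ((3:ℝ)/20) * Real.exp (-(613163/500000:ℝ)) = (Real.exp ((613163/500000:ℝ) - 3/20))⁻¹ := by
        rw [← Real.exp_add, ← Real.exp_neg]; congr 1; ring
      rw [this]
      have := inv_anti₀ (show (0:ℝ) < 2 by norm_num) h2e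
      linarith [this]
    have hRT := RT_lemma
    have hpn : (0:ℝ) ≤ Real.exp (-(613163/500000:ℝ)) ^ n := by positivity
    calc w (Nat.succPNat (n + 18)) * Real.exp (-c * Ek (Nat.succPNat (n + 18)))
        ≤ ((n:ℝ) + 19 + 1)^3 * (Real.exp (-(613163/500000 * 19)) * Real.exp (-(613163/500000:ℝ)) ^ n) := by
          apply mul_le_mul w1 _ (Real.exp_pos _).le (by positivity)
          rw [← e2]; exact e1
      _ ≤ (8000 * Real.exp ((3:ℝ)/20) ^ n) * ((9504364581507451/125000000000000000000000000 : ℝ) * Real.exp (-(613163/500000:ℝ)) ^ n) := by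
          apply mul_le_mul w2 (mul_le_mul_of_nonneg_right hRT hpn) (by positivity) (by positivity)
      _ = (8000 * (9504364581507451/125000000000000000000000000 : ℝ)) * (Real.exp ((3:ℝ)/20) * Real.exp (-(613163/500000:ℝ))) ^ n := by
          rw [mul_pow]; ring
      _ ≤ (8000 * (9504364581507451/125000000000000000000000000 : ℝ)) * (1/2)^n := by
          apply mul_le_mul_of_nonneg_left (pow_le_pow_left₀ (by positivity) c1 n) (by norm_num)
  have hg : Summable (fun n : ℕ => (8000 * (9504364581507451/125000000000000000000000000 : ℝ)) * (1/2:ℝ)^n) :=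
    (summable_geometric_of_lt_one (by norm_num) (by norm_num)).mul_left _
  calc (∑' n : ℕ, w (Nat.succPNat (n + 18)) * Real.exp (-c * Ek (Nat.succPNat (n + 18))))
      ≤ ∑' n : ℕ, (8000 * (9504364581507451/125000000000000000000000000 : ℝ)) * (1/2:ℝ)^n := Summable.tsum_le_tsum key hs hg
    _ ≤ (1216559/1000000000000 : ℝ) := by
        rw [tsum_mul_left, tsum_geometric_of_lt_one (by norm_num) (by norm_num)]
        norm_num

lemma sL1 : ((692820323/400000000 : ℝ)) ≤ Real.sqrt 3 := sqrt_lb (by norm_num) (by norm_num)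
lemma sU1 : Real.sqrt 3 ≤ ((4330127019/2500000000 : ℝ)) := sqrt_ub (by norm_num) (by norm_num) (by norm_num)
lemma sL2 : ((28284271247/10000000000 : ℝ)) ≤ Real.sqrt 8 := sqrt_lb (by norm_num) (by norm_num)
lemma sU2 : Real.sqrt 8 ≤ ((1767766953/625000000 : ℝ)) := sqrt_ub (by norm_num) (by norm_num) (by norm_num)
lemma sL3 : ((19364916731/5000000000 : ℝ)) ≤ Real.sqrt 15 := sqrt_lb (by norm_num) (by norm_num)
lemma sU3 : Real.sqrt 15 ≤ ((38729833463/10000000000 : ℝ)) := sqrt_ub (by norm_num) (by norm_num) (by norm_num)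
lemma sL4 : ((9797958971/2000000000 : ℝ)) ≤ Real.sqrt 24 := sqrt_lb (by norm_num) (by norm_num)
lemma sU4 : Real.sqrt 24 ≤ ((6123724357/1250000000 : ℝ)) := sqrt_ub (by norm_num) (by norm_num) (by norm_num)
lemma sL5 : ((5916079783/1000000000 : ℝ)) ≤ Real.sqrt 35 := sqrt_lb (by norm_num) (by norm_num)
lemma sU5 : Real.sqrt 35 ≤ ((59160797831/10000000000 : ℝ)) := sqrt_ub (by norm_num) (by norm_num) (by norm_num)
lemma sL6 : ((34641016151/5000000000 : ℝ)) ≤ Real.sqrt 48 := sqrt_lb (by norm_num) (by norm_num)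
lemma sU6 : Real.sqrt 48 ≤ ((69282032303/10000000000 : ℝ)) := sqrt_ub (by norm_num) (by norm_num) (by norm_num)
lemma sL7 : ((79372539331/10000000000 : ℝ)) ≤ Real.sqrt 63 := sqrt_lb (by norm_num) (by norm_num)
lemma sU7 : Real.sqrt 63 ≤ ((19843134833/2500000000 : ℝ)) := sqrt_ub (by norm_num) (by norm_num) (by norm_num)
lemma sL8 : ((89442719099/10000000000 : ℝ)) ≤ Real.sqrt 80 := sqrt_lb (by norm_num) (by norm_num)
lemma sU8 : Real.sqrt 80 ≤ ((894427191/100000000 : ℝ)) := sqrt_ub (by norm_num) (by norm_num) (by norm_num)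
lemma sL9 : ((9949874371/1000000000 : ℝ)) ≤ Real.sqrt 99 := sqrt_lb (by norm_num) (by norm_num)
lemma sU9 : Real.sqrt 99 ≤ ((99498743711/10000000000 : ℝ)) := sqrt_ub (by norm_num) (by norm_num) (by norm_num)
lemma sL10 : ((109544511501/10000000000 : ℝ)) ≤ Real.sqrt 120 := sqrt_lb (by norm_num) (by norm_num)
lemma sU10 : Real.sqrt 120 ≤ ((54772255751/5000000000 : ℝ)) := sqrt_ub (by norm_num) (by norm_num) (by norm_num)
lemma sL11 : ((119582607431/10000000000 : ℝ)) ≤ Real.sqrt 143 := sqrt_lb (by norm_num) (by norm_num)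
lemma sU11 : Real.sqrt 143 ≤ ((14947825929/1250000000 : ℝ)) := sqrt_ub (by norm_num) (by norm_num) (by norm_num)
lemma sL12 : ((8100925873/625000000 : ℝ)) ≤ Real.sqrt 168 := sqrt_lb (by norm_num) (by norm_num)
lemma sU12 : Real.sqrt 168 ≤ ((129614813969/10000000000 : ℝ)) := sqrt_ub (by norm_num) (by norm_num) (by norm_num)
lemma sL13 : ((139642400437/10000000000 : ℝ)) ≤ Real.sqrt 195 := sqrt_lb (by norm_num) (by norm_num)
lemma sU13 : Real.sqrt 195 ≤ ((69821200219/5000000000 : ℝ)) := sqrt_ub (by norm_num) (by norm_num) (by norm_num)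
lemma sL14 : ((14966629547/1000000000 : ℝ)) ≤ Real.sqrt 224 := sqrt_lb (by norm_num) (by norm_num)
lemma sU14 : Real.sqrt 224 ≤ ((149666295471/10000000000 : ℝ)) := sqrt_ub (by norm_num) (by norm_num) (by norm_num)
lemma sL15 : ((79843597113/5000000000 : ℝ)) ≤ Real.sqrt 255 := sqrt_lb (by norm_num) (by norm_num)
lemma sU15 : Real.sqrt 255 ≤ ((159687194227/10000000000 : ℝ)) := sqrt_ub (by norm_num) (by norm_num) (by norm_num)
lemma sL16 : ((42426406871/2500000000 : ℝ)) ≤ Real.sqrt 288 := sqrt_lb (by norm_num) (by norm_num)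
lemma sU16 : Real.sqrt 288 ≤ ((33941125497/2000000000 : ℝ)) := sqrt_ub (by norm_num) (by norm_num) (by norm_num)
lemma sL17 : ((44930501889/2500000000 : ℝ)) ≤ Real.sqrt 323 := sqrt_lb (by norm_num) (by norm_num)
lemma sU17 : Real.sqrt 323 ≤ ((179722007557/10000000000 : ℝ)) := sqrt_ub (by norm_num) (by norm_num) (by norm_num)
lemma sL18 : ((18973665961/1000000000 : ℝ)) ≤ Real.sqrt 360 := sqrt_lb (by norm_num) (by norm_num)
lemma sU18 : Real.sqrt 360 ≤ ((189736659611/10000000000 : ℝ)) := sqrt_ub (by norm_num) (by norm_num) (by norm_num)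

lemma ua1 : Real.exp (-(613163/500000 * Real.sqrt 3)) ≤ (11954541493340637/100000000000000000 : ℝ) :=
  exp_neg_le _ ((692820323/400000000 : ℝ)) _ _ (by norm_num) (by norm_num) sL1 (by unfold PL; norm_num)
lemma la1 : ((2390908297729773/20000000000000000 : ℝ)) ≤ Real.exp (-(613163/500000 * Real.sqrt 3)) :=
  le_exp_neg _ ((4330127019/2500000000 : ℝ)) _ _ (by norm_num) (by norm_num) sU1 (Real.sqrt_nonneg _) (by norm_num) (by unfold PU PL; norm_num)
lemma ub1 : Real.exp (-(1226349/1000000 * Real.sqrt 3)) ≤ (2390813053548363/20000000000000000 : ℝ) :=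
  exp_neg_le _ ((692820323/400000000 : ℝ)) _ _ (by norm_num) (by norm_num) sL1 (by unfold PL; norm_num)
lemma lb1 : ((11954065263049783/100000000000000000 : ℝ)) ≤ Real.exp (-(1226349/1000000 * Real.sqrt 3)) :=
  le_exp_neg _ ((4330127019/2500000000 : ℝ)) _ _ (by norm_num) (by norm_num) sU1 (Real.sqrt_nonneg _) (by norm_num) (by unfold PU PL; norm_num)
lemma ua2 : Real.exp (-(613163/500000 * Real.sqrt 8)) ≤ (31161443890320799/1000000000000000000 : ℝ) :=
  exp_neg_le _ ((28284271247/10000000000 : ℝ)) _ _ (by norm_num) (by norm_num) sL2 (by unfold PL; norm_num)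
lemma la2 : ((15580721818416751/500000000000000000 : ℝ)) ≤ Real.exp (-(613163/500000 * Real.sqrt 8)) :=
  le_exp_neg _ ((1767766953/625000000 : ℝ)) _ _ (by norm_num) (by norm_num) sU2 (Real.sqrt_nonneg _) (by norm_num) (by unfold PU PL; norm_num)
lemma ub2 : Real.exp (-(1226349/1000000 * Real.sqrt 8)) ≤ (6231883357035753/200000000000000000 : ℝ) :=
  exp_neg_le _ ((28284271247/10000000000 : ℝ)) _ _ (by norm_num) (by norm_num) sL2 (by unfold PL; norm_num)
lemma lb2 : ((973731766614863/31250000000000000 : ℝ)) ≤ Real.exp (-(1226349/1000000 * Real.sqrt 8)) :=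
  le_exp_neg _ ((1767766953/625000000 : ℝ)) _ _ (by norm_num) (by norm_num) sU2 (Real.sqrt_nonneg _) (by norm_num) (by unfold PU PL; norm_num)
lemma ua3 : Real.exp (-(613163/500000 * Real.sqrt 15)) ≤ (3462269784059629/400000000000000000 : ℝ) :=
  exp_neg_le _ ((19364916731/5000000000 : ℝ)) _ _ (by norm_num) (by norm_num) sL3 (by unfold PL; norm_num)
lemma la3 : ((43278369288447243/5000000000000000000 : ℝ)) ≤ Real.exp (-(613163/500000 * Real.sqrt 15)) :=
  le_exp_neg _ ((38729833463/10000000000 : ℝ)) _ _ (by norm_num) (by norm_num) sU3 (Real.sqrt_nonneg _) (by norm_num) (by unfold PU PL; norm_num)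
lemma ub3 : Real.exp (-(1226349/1000000 * Real.sqrt 15)) ≤ (86549034589895217/10000000000000000000 : ℝ) :=
  exp_neg_le _ ((19364916731/5000000000 : ℝ)) _ _ (by norm_num) (by norm_num) sL3 (by unfold PL; norm_num)
lemma lb3 : ((86549028565062631/10000000000000000000 : ℝ)) ≤ Real.exp (-(1226349/1000000 * Real.sqrt 15)) :=
  le_exp_neg _ ((38729833463/10000000000 : ℝ)) _ _ (by norm_num) (by norm_num) sU3 (Real.sqrt_nonneg _) (by norm_num) (by unfold PU PL; norm_num)
lemma ua4 : Real.exp (-(613163/500000 * Real.sqrt 24)) ≤ (24596262481289311/10000000000000000000 : ℝ) :=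
  exp_neg_le _ ((9797958971/2000000000 : ℝ)) _ _ (by norm_num) (by norm_num) sL4 (by unfold PL; norm_num)
lemma la4 : ((3074531745679837/1250000000000000000 : ℝ)) ≤ Real.exp (-(613163/500000 * Real.sqrt 24)) :=
  le_exp_neg _ ((6123724357/1250000000 : ℝ)) _ _ (by norm_num) (by norm_num) sU4 (Real.sqrt_nonneg _) (by norm_num) (by unfold PU PL; norm_num)
lemma ub4 : Real.exp (-(1226349/1000000 * Real.sqrt 24)) ≤ (24593491216097951/10000000000000000000 : ℝ) :=
  exp_neg_le _ ((9797958971/2000000000 : ℝ)) _ _ (by norm_num) (by norm_num) sL4 (by unfold PL; norm_num)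
lemma lb4 : ((24593482700119181/10000000000000000000 : ℝ)) ≤ Real.exp (-(1226349/1000000 * Real.sqrt 24)) :=
  le_exp_neg _ ((6123724357/1250000000 : ℝ)) _ _ (by norm_num) (by norm_num) sU4 (Real.sqrt_nonneg _) (by norm_num) (by unfold PU PL; norm_num)
lemma ua5 : Real.exp (-(613163/500000 * Real.sqrt 35)) ≤ (17665062312424531/25000000000000000000 : ℝ) :=
  exp_neg_le _ ((5916079783/1000000000 : ℝ)) _ _ (by norm_num) (by norm_num) sL5 (by unfold PL; norm_num)
lemma la5 : ((70660161146106269/100000000000000000000 : ℝ)) ≤ Real.exp (-(613163/500000 * Real.sqrt 35)) :=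
  le_exp_neg _ ((59160797831/10000000000 : ℝ)) _ _ (by norm_num) (by norm_num) sU5 (Real.sqrt_nonneg _) (by norm_num) (by unfold PU PL; norm_num)
lemma ub5 : Real.exp (-(1226349/1000000 * Real.sqrt 35)) ≤ (70650635176794203/100000000000000000000 : ℝ) :=
  exp_neg_le _ ((5916079783/1000000000 : ℝ)) _ _ (by norm_num) (by norm_num) sL5 (by unfold PL; norm_num)
lemma lb5 : ((35325273536999731/50000000000000000000 : ℝ)) ≤ Real.exp (-(1226349/1000000 * Real.sqrt 35)) :=
  le_exp_neg _ ((59160797831/10000000000 : ℝ)) _ _ (by norm_num) (by norm_num) sU5 (Real.sqrt_nonneg _) (by norm_num) (by unfold PU PL; norm_num)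
lemma ua6 : Real.exp (-(613163/500000 * Real.sqrt 48)) ≤ (20423581289412489/100000000000000000000 : ℝ) :=
  exp_neg_le _ ((34641016151/5000000000 : ℝ)) _ _ (by norm_num) (by norm_num) sL6 (by unfold PL; norm_num)
lemma la6 : ((20423507297734953/100000000000000000000 : ℝ)) ≤ Real.exp (-(613163/500000 * Real.sqrt 48)) :=
  le_exp_neg _ ((69282032303/10000000000 : ℝ)) _ _ (by norm_num) (by norm_num) sU6 (Real.sqrt_nonneg _) (by norm_num) (by unfold PU PL; norm_num)
lemma ub6 : Real.exp (-(1226349/1000000 * Real.sqrt 48)) ≤ (4084065415861557/20000000000000000000 : ℝ) :=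
  exp_neg_le _ ((34641016151/5000000000 : ℝ)) _ _ (by norm_num) (by norm_num) sL6 (by unfold PL; norm_num)
lemma lb6 : ((4084050618015081/20000000000000000000 : ℝ)) ≤ Real.exp (-(1226349/1000000 * Real.sqrt 48)) :=
  le_exp_neg _ ((69282032303/10000000000 : ℝ)) _ _ (by norm_num) (by norm_num) sU6 (Real.sqrt_nonneg _) (by norm_num) (by unfold PU PL; norm_num)
lemma ua7 : Real.exp (-(613163/500000 * Real.sqrt 63)) ≤ (29627520723326787/500000000000000000000 : ℝ) :=
  exp_neg_le _ ((79372539331/10000000000 : ℝ)) _ _ (by norm_num) (by norm_num) sL7 (by unfold PL; norm_num)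
lemma la7 : ((11850901297676691/200000000000000000000 : ℝ)) ≤ Real.exp (-(613163/500000 * Real.sqrt 63)) :=
  le_exp_neg _ ((19843134833/2500000000 : ℝ)) _ _ (by norm_num) (by norm_num) sU7 (Real.sqrt_nonneg _) (by norm_num) (by unfold PU PL; norm_num)
lemma ub7 : Real.exp (-(1226349/1000000 * Real.sqrt 63)) ≤ (3702764064351241/62500000000000000000 : ℝ) :=
  exp_neg_le _ ((79372539331/10000000000 : ℝ)) _ _ (by norm_num) (by norm_num) sL7 (by unfold PL; norm_num)
lemma lb7 : ((59243690101829931/1000000000000000000000 : ℝ)) ≤ Real.exp (-(1226349/1000000 * Real.sqrt 63)) :=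
  le_exp_neg _ ((19843134833/2500000000 : ℝ)) _ _ (by norm_num) (by norm_num) sU7 (Real.sqrt_nonneg _) (by norm_num) (by unfold PU PL; norm_num)
lemma ua8 : Real.exp (-(613163/500000 * Real.sqrt 80)) ≤ (344692341097183/20000000000000000000 : ℝ) :=
  exp_neg_le _ ((89442719099/10000000000 : ℝ)) _ _ (by norm_num) (by norm_num) sL8 (by unfold PL; norm_num)
lemma la8 : ((8617135815056989/500000000000000000000 : ℝ)) ≤ Real.exp (-(613163/500000 * Real.sqrt 80)) :=
  le_exp_neg _ ((894427191/100000000 : ℝ)) _ _ (by norm_num) (by norm_num) sU8 (Real.sqrt_nonneg _) (by norm_num) (by unfold PU PL; norm_num)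
lemma ub8 : Real.exp (-(1226349/1000000 * Real.sqrt 80)) ≤ (861553597492943/50000000000000000000 : ℝ) :=
  exp_neg_le _ ((89442719099/10000000000 : ℝ)) _ _ (by norm_num) (by norm_num) sL8 (by unfold PL; norm_num)
lemma lb8 : ((17230726553044751/1000000000000000000000 : ℝ)) ≤ Real.exp (-(1226349/1000000 * Real.sqrt 80)) :=
  le_exp_neg _ ((894427191/100000000 : ℝ)) _ _ (by norm_num) (by norm_num) sU8 (Real.sqrt_nonneg _) (by norm_num) (by unfold PU PL; norm_num)
lemma ua9 : Real.exp (-(613163/500000 * Real.sqrt 99)) ≤ (50214877531905053/10000000000000000000000 : ℝ) :=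
  exp_neg_le _ ((9949874371/1000000000 : ℝ)) _ _ (by norm_num) (by norm_num) sL9 (by unfold PL; norm_num)
lemma la9 : ((50212836029290021/10000000000000000000000 : ℝ)) ≤ Real.exp (-(613163/500000 * Real.sqrt 99)) :=
  le_exp_neg _ ((99498743711/10000000000 : ℝ)) _ _ (by norm_num) (by norm_num) sU9 (Real.sqrt_nonneg _) (by norm_num) (by unfold PU PL; norm_num)
lemma ub9 : Real.exp (-(1226349/1000000 * Real.sqrt 99)) ≤ (12550846837643723/2500000000000000000000 : ℝ) :=
  exp_neg_le _ ((9949874371/1000000000 : ℝ)) _ _ (by norm_num) (by norm_num) sL9 (by unfold PL; norm_num)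
lemma lb9 : ((50201346061725809/10000000000000000000000 : ℝ)) ≤ Real.exp (-(1226349/1000000 * Real.sqrt 99)) :=
  le_exp_neg _ ((99498743711/10000000000 : ℝ)) _ _ (by norm_num) (by norm_num) sU9 (Real.sqrt_nonneg _) (by norm_num) (by unfold PU PL; norm_num)
lemma ua10 : Real.exp (-(613163/500000 * Real.sqrt 120)) ≤ (14649079569445959/10000000000000000000000 : ℝ) :=
  exp_neg_le _ ((109544511501/10000000000 : ℝ)) _ _ (by norm_num) (by norm_num) sL10 (by unfold PL; norm_num)
lemma la10 : ((14647955971534493/10000000000000000000000 : ℝ)) ≤ Real.exp (-(613163/500000 * Real.sqrt 120)) :=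
  le_exp_neg _ ((54772255751/5000000000 : ℝ)) _ _ (by norm_num) (by norm_num) sU10 (Real.sqrt_nonneg _) (by norm_num) (by unfold PU PL; norm_num)
lemma ub10 : Real.exp (-(1226349/1000000 * Real.sqrt 120)) ≤ (2929077836478901/2000000000000000000000 : ℝ) :=
  exp_neg_le _ ((109544511501/10000000000 : ℝ)) _ _ (by norm_num) (by norm_num) sL10 (by unfold PL; norm_num)
lemma lb10 : ((7322132864452993/5000000000000000000000 : ℝ)) ≤ Real.exp (-(1226349/1000000 * Real.sqrt 120)) :=
  le_exp_neg _ ((54772255751/5000000000 : ℝ)) _ _ (by norm_num) (by norm_num) sU10 (Real.sqrt_nonneg _) (by norm_num) (by unfold PU PL; norm_num)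
lemma ua11 : Real.exp (-(613163/500000 * Real.sqrt 143)) ≤ (21387904915852073/50000000000000000000000 : ℝ) :=
  exp_neg_le _ ((119582607431/10000000000 : ℝ)) _ _ (by norm_num) (by norm_num) sL11 (by unfold PL; norm_num)
lemma la11 : ((10692494448551963/25000000000000000000000 : ℝ)) ≤ Real.exp (-(613163/500000 * Real.sqrt 143)) :=
  le_exp_neg _ ((14947825929/1250000000 : ℝ)) _ _ (by norm_num) (by norm_num) sU11 (Real.sqrt_nonneg _) (by norm_num) (by unfold PU PL; norm_num)
lemma ub11 : Real.exp (-(1226349/1000000 * Real.sqrt 143)) ≤ (10691011621642179/25000000000000000000000 : ℝ) :=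
  exp_neg_le _ ((119582607431/10000000000 : ℝ)) _ _ (by norm_num) (by norm_num) sL11 (by unfold PL; norm_num)
lemma lb11 : ((4275821533755169/10000000000000000000000 : ℝ)) ≤ Real.exp (-(1226349/1000000 * Real.sqrt 143)) :=
  le_exp_neg _ ((14947825929/1250000000 : ℝ)) _ _ (by norm_num) (by norm_num) sU11 (Real.sqrt_nonneg _) (by norm_num) (by unfold PU PL; norm_num)
lemma ua12 : Real.exp (-(613163/500000 * Real.sqrt 168)) ≤ (2499952958064929/20000000000000000000000 : ℝ) :=
  exp_neg_le _ ((8100925873/625000000 : ℝ)) _ _ (by norm_num) (by norm_num) sL12 (by unfold PL; norm_num)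
lemma la12 : ((6248441334577367/50000000000000000000000 : ℝ)) ≤ Real.exp (-(613163/500000 * Real.sqrt 168)) :=
  le_exp_neg _ ((129614813969/10000000000 : ℝ)) _ _ (by norm_num) (by norm_num) sU12 (Real.sqrt_nonneg _) (by norm_num) (by unfold PU PL; norm_num)
lemma ub12 : Real.exp (-(1226349/1000000 * Real.sqrt 168)) ≤ (12496039037218613/100000000000000000000000 : ℝ) :=
  exp_neg_le _ ((8100925873/625000000 : ℝ)) _ _ (by norm_num) (by norm_num) sL12 (by unfold PL; norm_num)
lemma lb12 : ((12493157423705663/100000000000000000000000 : ℝ)) ≤ Real.exp (-(1226349/1000000 * Real.sqrt 168)) :=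
  le_exp_neg _ ((129614813969/10000000000 : ℝ)) _ _ (by norm_num) (by norm_num) sU12 (Real.sqrt_nonneg _) (by norm_num) (by unfold PU PL; norm_num)
lemma ua13 : Real.exp (-(613163/500000 * Real.sqrt 195)) ≤ (36547224867355517/1000000000000000000000000 : ℝ) :=
  exp_neg_le _ ((139642400437/10000000000 : ℝ)) _ _ (by norm_num) (by norm_num) sL13 (by unfold PL; norm_num)
lemma la13 : ((36533563873255511/1000000000000000000000000 : ℝ)) ≤ Real.exp (-(613163/500000 * Real.sqrt 195)) :=
  le_exp_neg _ ((69821200219/5000000000 : ℝ)) _ _ (by norm_num) (by norm_num) sU13 (Real.sqrt_nonneg _) (by norm_num) (by unfold PU PL; norm_num)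
lemma ub13 : Real.exp (-(1226349/1000000 * Real.sqrt 195)) ≤ (36535488829256277/1000000000000000000000000 : ℝ) :=
  exp_neg_le _ ((139642400437/10000000000 : ℝ)) _ _ (by norm_num) (by norm_num) sL13 (by unfold PL; norm_num)
lemma lb13 : ((36521830566346643/1000000000000000000000000 : ℝ)) ≤ Real.exp (-(1226349/1000000 * Real.sqrt 195)) :=
  le_exp_neg _ ((69821200219/5000000000 : ℝ)) _ _ (by norm_num) (by norm_num) sU13 (Real.sqrt_nonneg _) (by norm_num) (by unfold PU PL; norm_num)
lemma ua14 : Real.exp (-(613163/500000 * Real.sqrt 224)) ≤ (5345367850806709/500000000000000000000000 : ℝ) :=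
  exp_neg_le _ ((14966629547/1000000000 : ℝ)) _ _ (by norm_num) (by norm_num) sL14 (by unfold PL; norm_num)
lemma la14 : ((5342244487570327/500000000000000000000000 : ℝ)) ≤ Real.exp (-(613163/500000 * Real.sqrt 224)) :=
  le_exp_neg _ ((149666295471/10000000000 : ℝ)) _ _ (by norm_num) (by norm_num) sU14 (Real.sqrt_nonneg _) (by norm_num) (by unfold PU PL; norm_num)
lemma ub14 : Real.exp (-(1226349/1000000 * Real.sqrt 224)) ≤ (1335882042375121/125000000000000000000000 : ℝ) :=
  exp_neg_le _ ((14966629547/1000000000 : ℝ)) _ _ (by norm_num) (by norm_num) sL14 (by unfold PL; norm_num)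
lemma lb14 : ((2670202752489507/250000000000000000000000 : ℝ)) ≤ Real.exp (-(1226349/1000000 * Real.sqrt 224)) :=
  le_exp_neg _ ((149666295471/10000000000 : ℝ)) _ _ (by norm_num) (by norm_num) sU14 (Real.sqrt_nonneg _) (by norm_num) (by unfold PU PL; norm_num)
lemma ua15 : Real.exp (-(613163/500000 * Real.sqrt 255)) ≤ (15642126376106423/5000000000000000000000000 : ℝ) :=
  exp_neg_le _ ((79843597113/5000000000 : ℝ)) _ _ (by norm_num) (by norm_num) sL15 (by unfold PL; norm_num)
lemma la15 : ((3907070938994587/1250000000000000000000000 : ℝ)) ≤ Real.exp (-(613163/500000 * Real.sqrt 255)) :=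
  le_exp_neg _ ((159687194227/10000000000 : ℝ)) _ _ (by norm_num) (by norm_num) sU15 (Real.sqrt_nonneg _) (by norm_num) (by unfold PU PL; norm_num)
lemma ub15 : Real.exp (-(1226349/1000000 * Real.sqrt 255)) ≤ (7818191304736301/2500000000000000000000000 : ℝ) :=
  exp_neg_le _ ((79843597113/5000000000 : ℝ)) _ _ (by norm_num) (by norm_num) sL15 (by unfold PL; norm_num)
lemma lb15 : ((15622543415142783/5000000000000000000000000 : ℝ)) ≤ Real.exp (-(1226349/1000000 * Real.sqrt 255)) :=
  le_exp_neg _ ((159687194227/10000000000 : ℝ)) _ _ (by norm_num) (by norm_num) sU15 (Real.sqrt_nonneg _) (by norm_num) (by unfold PU PL; norm_num)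
lemma ua16 : Real.exp (-(613163/500000 * Real.sqrt 288)) ≤ (45788082328011083/50000000000000000000000000 : ℝ) :=
  exp_neg_le _ ((42426406871/2500000000 : ℝ)) _ _ (by norm_num) (by norm_num) sL16 (by unfold PL; norm_num)
lemma la16 : ((91456787574165601/100000000000000000000000000 : ℝ)) ≤ Real.exp (-(613163/500000 * Real.sqrt 288)) :=
  le_exp_neg _ ((33941125497/2000000000 : ℝ)) _ _ (by norm_num) (by norm_num) sU16 (Real.sqrt_nonneg _) (by norm_num) (by unfold PU PL; norm_num)
lemma ub16 : Real.exp (-(1226349/1000000 * Real.sqrt 288)) ≤ (22885107328157311/25000000000000000000000000 : ℝ) :=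
  exp_neg_le _ ((42426406871/2500000000 : ℝ)) _ _ (by norm_num) (by norm_num) sL16 (by unfold PL; norm_num)
lemma lb16 : ((11427635576573149/12500000000000000000000000 : ℝ)) ≤ Real.exp (-(1226349/1000000 * Real.sqrt 288)) :=
  le_exp_neg _ ((33941125497/2000000000 : ℝ)) _ _ (by norm_num) (by norm_num) sU16 (Real.sqrt_nonneg _) (by norm_num) (by unfold PU PL; norm_num)
lemma ua17 : Real.exp (-(613163/500000 * Real.sqrt 323)) ≤ (26813760967343347/100000000000000000000000000 : ℝ) :=
  exp_neg_le _ ((44930501889/2500000000 : ℝ)) _ _ (by norm_num) (by norm_num) sL17 (by unfold PL; norm_num)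
lemma la17 : ((26763522774117327/100000000000000000000000000 : ℝ)) ≤ Real.exp (-(613163/500000 * Real.sqrt 323)) :=
  le_exp_neg _ ((179722007557/10000000000 : ℝ)) _ _ (by norm_num) (by norm_num) sU17 (Real.sqrt_nonneg _) (by norm_num) (by unfold PU PL; norm_num)
lemma ub17 : Real.exp (-(1226349/1000000 * Real.sqrt 323)) ≤ (13401340164990141/50000000000000000000000000 : ℝ) :=
  exp_neg_le _ ((44930501889/2500000000 : ℝ)) _ _ (by norm_num) (by norm_num) sL17 (by unfold PL; norm_num)
lemma lb17 : ((6688114239658123/25000000000000000000000000 : ℝ)) ≤ Real.exp (-(1226349/1000000 * Real.sqrt 323)) :=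
  le_exp_neg _ ((179722007557/10000000000 : ℝ)) _ _ (by norm_num) (by norm_num) sU17 (Real.sqrt_nonneg _) (by norm_num) (by unfold PU PL; norm_num)
lemma ua18 : Real.exp (-(613163/500000 * Real.sqrt 360)) ≤ (78530223675366711/1000000000000000000000000000 : ℝ) :=
  exp_neg_le _ ((18973665961/1000000000 : ℝ)) _ _ (by norm_num) (by norm_num) sL18 (by unfold PL; norm_num)
lemma la18 : ((39161670041359597/500000000000000000000000000 : ℝ)) ≤ Real.exp (-(613163/500000 * Real.sqrt 360)) :=
  le_exp_neg _ ((189736659611/10000000000 : ℝ)) _ _ (by norm_num) (by norm_num) sU18 (Real.sqrt_nonneg _) (by norm_num) (by unfold PU PL; norm_num)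
lemma ub18 : Real.exp (-(1226349/1000000 * Real.sqrt 360)) ≤ (9811995550878231/125000000000000000000000000 : ℝ) :=
  exp_neg_le _ ((18973665961/1000000000 : ℝ)) _ _ (by norm_num) (by norm_num) sL18 (by unfold PL; norm_num)
lemma lb18 : ((3131565870844867/40000000000000000000000000 : ℝ)) ≤ Real.exp (-(1226349/1000000 * Real.sqrt 360)) :=
  le_exp_neg _ ((189736659611/10000000000 : ℝ)) _ _ (by norm_num) (by norm_num) sU18 (Real.sqrt_nonneg _) (by norm_num) (by unfold PU PL; norm_num)

lemma lgu2 : Real.log 2 ≤ ((8664339757/12500000000 : ℝ)) := log_le_of _ _ (by norm_num) (by norm_num) (by unfold PL; norm_num)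
lemma lgl2 : ((693147180559/1000000000000 : ℝ)) ≤ Real.log 2 := le_log_of _ _ (by norm_num) (by norm_num) (by norm_num) (by unfold PU PL; norm_num)
lemma lgu3 : Real.log 3 ≤ ((1098612288669/1000000000000 : ℝ)) := log_le_of _ _ (by norm_num) (by norm_num) (by unfold PL; norm_num)
lemma lgl3 : ((219722457733/200000000000 : ℝ)) ≤ Real.log 3 := le_log_of _ _ (by norm_num) (by norm_num) (by norm_num) (by unfold PU PL; norm_num)
lemma lgu4 : Real.log 4 ≤ ((693147180561/500000000000 : ℝ)) := log_le_of _ _ (by norm_num) (by norm_num) (by unfold PL; norm_num)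
lemma lgl4 : ((1386294361107/1000000000000 : ℝ)) ≤ Real.log 4 := le_log_of _ _ (by norm_num) (by norm_num) (by norm_num) (by unfold PU PL; norm_num)
lemma lgu5 : Real.log 5 ≤ ((40235947811/25000000000 : ℝ)) := log_le_of _ _ (by norm_num) (by norm_num) (by unfold PL; norm_num)
lemma lgl5 : ((1609437912399/1000000000000 : ℝ)) ≤ Real.log 5 := le_log_of _ _ (by norm_num) (by norm_num) (by norm_num) (by unfold PU PL; norm_num)
lemma lgu6 : Real.log 6 ≤ ((1791759469239/1000000000000 : ℝ)) := log_le_of _ _ (by norm_num) (by norm_num) (by unfold PL; norm_num)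
lemma lgl6 : ((358351893831/200000000000 : ℝ)) ≤ Real.log 6 := le_log_of _ _ (by norm_num) (by norm_num) (by norm_num) (by unfold PU PL; norm_num)
lemma lgu7 : Real.log 7 ≤ ((972955074537/500000000000 : ℝ)) := log_le_of _ _ (by norm_num) (by norm_num) (by unfold PL; norm_num)
lemma lgl7 : ((972955074463/500000000000 : ℝ)) ≤ Real.log 7 := le_log_of _ _ (by norm_num) (by norm_num) (by norm_num) (by unfold PU PL; norm_num)
lemma lgu8 : Real.log 8 ≤ ((207944154171/100000000000 : ℝ)) := log_le_of _ _ (by norm_num) (by norm_num) (by unfold PL; norm_num)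
lemma lgl8 : ((519860385369/250000000000 : ℝ)) ≤ Real.log 8 := le_log_of _ _ (by norm_num) (by norm_num) (by norm_num) (by unfold PU PL; norm_num)
lemma lgu9 : Real.log 9 ≤ ((109861228869/50000000000 : ℝ)) := log_le_of _ _ (by norm_num) (by norm_num) (by unfold PL; norm_num)
lemma lgl9 : ((1098612288519/500000000000 : ℝ)) ≤ Real.log 9 := le_log_of _ _ (by norm_num) (by norm_num) (by norm_num) (by unfold PU PL; norm_num)
lemma lgu10 : Real.log 10 ≤ ((1151292546527/500000000000 : ℝ)) := log_le_of _ _ (by norm_num) (by norm_num) (by unfold PL; norm_num)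
lemma lgl10 : ((2302585092581/1000000000000 : ℝ)) ≤ Real.log 10 := le_log_of _ _ (by norm_num) (by norm_num) (by norm_num) (by unfold PU PL; norm_num)
lemma lgu11 : Real.log 11 ≤ ((1198947636439/500000000000 : ℝ)) := log_le_of _ _ (by norm_num) (by norm_num) (by unfold PL; norm_num)
lemma lgl11 : ((599473818063/250000000000 : ℝ)) ≤ Real.log 11 := le_log_of _ _ (by norm_num) (by norm_num) (by norm_num) (by unfold PU PL; norm_num)
lemma lgu12 : Real.log 12 ≤ ((248490664989/100000000000 : ℝ)) := log_le_of _ _ (by norm_num) (by norm_num) (by unfold PL; norm_num)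
lemma lgl12 : ((4853333299/1953125000 : ℝ)) ≤ Real.log 12 := le_log_of _ _ (by norm_num) (by norm_num) (by norm_num) (by unfold PU PL; norm_num)
lemma lgu13 : Real.log 13 ≤ ((641237339397/250000000000 : ℝ)) := log_le_of _ _ (by norm_num) (by norm_num) (by unfold PL; norm_num)
lemma lgl13 : ((256494935659/100000000000 : ℝ)) ≤ Real.log 13 := le_log_of _ _ (by norm_num) (by norm_num) (by norm_num) (by unfold PU PL; norm_num)
lemma lgu14 : Real.log 14 ≤ ((2639057329769/1000000000000 : ℝ)) := log_le_of _ _ (by norm_num) (by norm_num) (by unfold PL; norm_num)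
lemma lgl14 : ((1319528664277/500000000000 : ℝ)) ≤ Real.log 14 := le_log_of _ _ (by norm_num) (by norm_num) (by norm_num) (by unfold PU PL; norm_num)
lemma lgu15 : Real.log 15 ≤ ((1354025100643/500000000000 : ℝ)) := log_le_of _ _ (by norm_num) (by norm_num) (by unfold PL; norm_num)
lemma lgl15 : ((1354025099917/500000000000 : ℝ)) ≤ Real.log 15 := le_log_of _ _ (by norm_num) (by norm_num) (by norm_num) (by unfold PU PL; norm_num)
lemma lgu16 : Real.log 16 ≤ ((346573590307/125000000000 : ℝ)) := log_le_of _ _ (by norm_num) (by norm_num) (by unfold PL; norm_num)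
lemma lgl16 : ((693147180187/250000000000 : ℝ)) ≤ Real.log 16 := le_log_of _ _ (by norm_num) (by norm_num) (by norm_num) (by unfold PU PL; norm_num)
lemma lgu17 : Real.log 17 ≤ ((2833213344307/1000000000000 : ℝ)) := log_le_of _ _ (by norm_num) (by norm_num) (by unfold PL; norm_num)
lemma lgl17 : ((708303335581/250000000000 : ℝ)) ≤ Real.log 17 := le_log_of _ _ (by norm_num) (by norm_num) (by norm_num) (by unfold PU PL; norm_num)
lemma lgu18 : Real.log 18 ≤ ((361296469773/125000000000 : ℝ)) := log_le_of _ _ (by norm_num) (by norm_num) (by unfold PL; norm_num)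
lemma lgl18 : ((2890371755907/1000000000000 : ℝ)) ≤ Real.log 18 := le_log_of _ _ (by norm_num) (by norm_num) (by norm_num) (by unfold PU PL; norm_num)
lemma lgu19 : Real.log 19 ≤ ((1472219489747/500000000000 : ℝ)) := log_le_of _ _ (by norm_num) (by norm_num) (by unfold PL; norm_num)
lemma lgl19 : ((1472219488453/500000000000 : ℝ)) ≤ Real.log 19 := le_log_of _ _ (by norm_num) (by norm_num) (by norm_num) (by unfold PU PL; norm_num)


lemma w2_nonneg : ∀ k : ℕ+, (0:ℝ) ≤ (((k:ℕ):ℝ) + 1) ^ 2 := fun k => by positivity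

lemma w2_abs : ∀ k : ℕ+, |(((k:ℕ):ℝ) + 1) ^ 2| ≤ (((k:ℕ):ℝ) + 1)^3 := fun k => by
  have h0 : (0:ℝ) ≤ ((k:ℕ):ℝ) := by positivity
  rw [abs_of_nonneg (by positivity)]
  nlinarith

lemma w2_le3 : ∀ k : ℕ+, (((k:ℕ):ℝ) + 1) ^ 2 ≤ (((k:ℕ):ℝ) + 1)^3 := fun k => by
  have h0 : (0:ℝ) ≤ ((k:ℕ):ℝ) := by positivity
  nlinarith

lemma wlog_nonneg : ∀ k : ℕ+, (0:ℝ) ≤ (((k:ℕ):ℝ) + 1) ^ 2 * Real.log (((k:ℕ):ℝ) + 1) := fun k => by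
  have h0 : (0:ℝ) ≤ ((k:ℕ):ℝ) := by positivity
  exact mul_nonneg (by positivity) (Real.log_nonneg (by linarith))

lemma wlog_le3 : ∀ k : ℕ+, (((k:ℕ):ℝ) + 1) ^ 2 * Real.log (((k:ℕ):ℝ) + 1) ≤ (((k:ℕ):ℝ) + 1)^3 := fun k => by
  have h0 : (0:ℝ) ≤ ((k:ℕ):ℝ) := by positivity
  have hl : Real.log (((k:ℕ):ℝ) + 1) ≤ ((k:ℕ):ℝ) + 1 := by
    have := Real.log_le_sub_one_of_pos (show (0:ℝ) < ((k:ℕ):ℝ) + 1 by linarith)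
    linarith
  have hl0 : (0:ℝ) ≤ Real.log (((k:ℕ):ℝ) + 1) := Real.log_nonneg (by linarith)
  nlinarith

lemma wlog_abs : ∀ k : ℕ+, |(((k:ℕ):ℝ) + 1) ^ 2 * Real.log (((k:ℕ):ℝ) + 1)| ≤ (((k:ℕ):ℝ) + 1)^3 := fun k => by
  rw [abs_of_nonneg (wlog_nonneg k)]; exact wlog_le3 k

lemma wE_nonneg : ∀ k : ℕ+, (0:ℝ) ≤ (((k:ℕ):ℝ) + 1) ^ 2 * Real.sqrt (((k:ℕ):ℝ) * (((k:ℕ):ℝ) + 2)) :=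
  fun k => mul_nonneg (by positivity) (Real.sqrt_nonneg _)

lemma wE_le3 : ∀ k : ℕ+, (((k:ℕ):ℝ) + 1) ^ 2 * Real.sqrt (((k:ℕ):ℝ) * (((k:ℕ):ℝ) + 2)) ≤ (((k:ℕ):ℝ) + 1)^3 := fun k => by
  have h0 : (0:ℝ) ≤ ((k:ℕ):ℝ) := by positivity
  have hE : Real.sqrt (((k:ℕ):ℝ) * (((k:ℕ):ℝ) + 2)) ≤ ((k:ℕ):ℝ) + 1 := Ek_le k
  have hE0 : (0:ℝ) ≤ Real.sqrt (((k:ℕ):ℝ) * (((k:ℕ):ℝ) + 2)) := Real.sqrt_nonneg _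
  nlinarith

lemma wE_abs : ∀ k : ℕ+, |(((k:ℕ):ℝ) + 1) ^ 2 * Real.sqrt (((k:ℕ):ℝ) * (((k:ℕ):ℝ) + 2))| ≤ (((k:ℕ):ℝ) + 1)^3 := fun k => by
  rw [abs_of_nonneg (wE_nonneg k)]; exact wE_le3 k

lemma fa_lo : ((500011165551/500000000000 : ℝ)) ≤ ∑' k : ℕ+, (((k : ℕ) : ℝ) + 1) ^ 2 * Real.exp (-(613163/500000 : ℝ) * Ek k) := by
  have hs : Summable (fun k : ℕ+ => (((k : ℕ) : ℝ) + 1) ^ 2 * Real.exp (-(613163/500000 : ℝ) * Ek k)) :=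
    summable_main _ (by norm_num) _ w2_abs
  have hdec : (∑' k : ℕ+, (((k : ℕ) : ℝ) + 1) ^ 2 * Real.exp (-(613163/500000 : ℝ) * Ek k)) = (∑ i ∈ Finset.range 18, ((((Nat.succPNat i) : ℕ) : ℝ) + 1) ^ 2 * Real.exp (-(613163/500000 : ℝ) * Ek (Nat.succPNat i))) + (∑' n : ℕ, ((((Nat.succPNat (n + 18)) : ℕ) : ℝ) + 1) ^ 2 * Real.exp (-(613163/500000 : ℝ) * Ek (Nat.succPNat (n + 18)))) := pnat_decomp _ hs
  have hhead : ((250005582775618427322429751/250000000000000000000000000 : ℝ)) ≤ (∑ i ∈ Finset.range 18, ((((Nat.succPNat i) : ℕ) : ℝ) + 1) ^ 2 * Real.exp (-(613163/500000 : ℝ) * Ek (Nat.succPNat i))) := by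
    have t1 : ((2390908297729773/5000000000000000 : ℝ)) ≤ (4 : ℝ) * Real.exp (-(613163/500000 * Real.sqrt 3)) := by
      linarith [la1]
    have t2 : ((140226496365750759/500000000000000000 : ℝ)) ≤ (9 : ℝ) * Real.exp (-(613163/500000 * Real.sqrt 8)) := by
      linarith [la2]
    have t3 : ((43278369288447243/312500000000000000 : ℝ)) ≤ (16 : ℝ) * Real.exp (-(613163/500000 * Real.sqrt 15)) := by
      linarith [la3]
    have t4 : ((3074531745679837/50000000000000000 : ℝ)) ≤ (25 : ℝ) * Real.exp (-(613163/500000 * Real.sqrt 24)) := by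
      linarith [la4]
    have t5 : ((635941450314956421/25000000000000000000 : ℝ)) ≤ (36 : ℝ) * Real.exp (-(613163/500000 * Real.sqrt 35)) := by
      linarith [la5]
    have t6 : ((1000751857589012697/100000000000000000000 : ℝ)) ≤ (49 : ℝ) * Real.exp (-(613163/500000 * Real.sqrt 48)) := by
      linarith [la6]
    have t7 : ((11850901297676691/3125000000000000000 : ℝ)) ≤ (64 : ℝ) * Real.exp (-(613163/500000 * Real.sqrt 63)) := by
      linarith [la7]
    have t8 : ((697988001019616109/500000000000000000000 : ℝ)) ≤ (81 : ℝ) * Real.exp (-(613163/500000 * Real.sqrt 80)) := by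
      linarith [la8]
    have t9 : ((50212836029290021/100000000000000000000 : ℝ)) ≤ (100 : ℝ) * Real.exp (-(613163/500000 * Real.sqrt 99)) := by
      linarith [la9]
    have t10 : ((1772402672555673653/10000000000000000000000 : ℝ)) ≤ (121 : ℝ) * Real.exp (-(613163/500000 * Real.sqrt 120)) := by
      linarith [la10]
    have t11 : ((96232450036967667/1562500000000000000000 : ℝ)) ≤ (144 : ℝ) * Real.exp (-(613163/500000 * Real.sqrt 143)) := by
      linarith [la11]
    have t12 : ((1055986585543575023/50000000000000000000000 : ℝ)) ≤ (169 : ℝ) * Real.exp (-(613163/500000 * Real.sqrt 168)) := by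
      linarith [la12]
    have t13 : ((1790144629789520039/250000000000000000000000 : ℝ)) ≤ (196 : ℝ) * Real.exp (-(613163/500000 * Real.sqrt 195)) := by
      linarith [la13]
    have t14 : ((48080200388132943/20000000000000000000000 : ℝ)) ≤ (225 : ℝ) * Real.exp (-(613163/500000 * Real.sqrt 224)) := by
      linarith [la14]
    have t15 : ((3907070938994587/4882812500000000000000 : ℝ)) ≤ (256 : ℝ) * Real.exp (-(613163/500000 * Real.sqrt 255)) := by
      linarith [la15]
    have t16 : ((26431011608933858689/100000000000000000000000000 : ℝ)) ≤ (289 : ℝ) * Real.exp (-(613163/500000 * Real.sqrt 288)) := by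
      linarith [la16]
    have t17 : ((2167845344703503487/25000000000000000000000000 : ℝ)) ≤ (324 : ℝ) * Real.exp (-(613163/500000 * Real.sqrt 323)) := by
      linarith [la17]
    have t18 : ((14137362884930814517/500000000000000000000000000 : ℝ)) ≤ (361 : ℝ) * Real.exp (-(613163/500000 * Real.sqrt 360)) := by
      linarith [la18]
    simp only [Finset.sum_range_succ, Finset.sum_range_zero, Nat.succPNat_coe, Ek]
    norm_num
    linarith [t1, t2, t3, t4, t5, t6, t7, t8, t9, t10, t11, t12, t13, t14, t15, t16, t17, t18]
  have htail : (0:ℝ) ≤ (∑' n : ℕ, ((((Nat.succPNat (n + 18)) : ℕ) : ℝ) + 1) ^ 2 * Real.exp (-(613163/500000 : ℝ) * Ek (Nat.succPNat (n + 18)))) :=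
    tsum_nonneg (fun n => mul_nonneg (w2_nonneg _) (Real.exp_pos _).le)
  rw [hdec]
  have : ((500011165551/500000000000 : ℝ) : ℝ) ≤ (250005582775618427322429751/250000000000000000000000000 : ℝ) := by norm_num
  linarith [hhead, htail]

lemma fb_up : (∑' k : ℕ+, (((k : ℕ) : ℝ) + 1) ^ 2 * Real.exp (-(1226349/1000000 : ℝ) * Ek k)) ≤ (499980492677/500000000000 : ℝ) := by
  have hs : Summable (fun k : ℕ+ => (((k : ℕ) : ℝ) + 1) ^ 2 * Real.exp (-(1226349/1000000 : ℝ) * Ek k)) :=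
    summable_main _ (by norm_num) _ w2_abs
  have hdec : (∑' k : ℕ+, (((k : ℕ) : ℝ) + 1) ^ 2 * Real.exp (-(1226349/1000000 : ℝ) * Ek k)) = (∑ i ∈ Finset.range 18, ((((Nat.succPNat i) : ℕ) : ℝ) + 1) ^ 2 * Real.exp (-(1226349/1000000 : ℝ) * Ek (Nat.succPNat i))) + (∑' n : ℕ, ((((Nat.succPNat (n + 18)) : ℕ) : ℝ) + 1) ^ 2 * Real.exp (-(1226349/1000000 : ℝ) * Ek (Nat.succPNat (n + 18)))) := pnat_decomp _ hs
  have hhead : (∑ i ∈ Finset.range 18, ((((Nat.succPNat i) : ℕ) : ℝ) + 1) ^ 2 * Real.exp (-(1226349/1000000 : ℝ) * Ek (Nat.succPNat i))) ≤ (62497485549629406545486523/62500000000000000000000000 : ℝ) := by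
    have t1 : (4 : ℝ) * Real.exp (-(1226349/1000000 * Real.sqrt 3)) ≤ (2390813053548363/5000000000000000 : ℝ) := by
      linarith [ub1]
    have t2 : (9 : ℝ) * Real.exp (-(1226349/1000000 * Real.sqrt 8)) ≤ (56086950213321777/200000000000000000 : ℝ) := by
      linarith [ub2]
    have t3 : (16 : ℝ) * Real.exp (-(1226349/1000000 * Real.sqrt 15)) ≤ (86549034589895217/625000000000000000 : ℝ) := by
      linarith [ub3]
    have t4 : (25 : ℝ) * Real.exp (-(1226349/1000000 * Real.sqrt 24)) ≤ (24593491216097951/400000000000000000 : ℝ) := by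
      linarith [ub4]
    have t5 : (36 : ℝ) * Real.exp (-(1226349/1000000 * Real.sqrt 35)) ≤ (635855716591147827/25000000000000000000 : ℝ) := by
      linarith [ub5]
    have t6 : (49 : ℝ) * Real.exp (-(1226349/1000000 * Real.sqrt 48)) ≤ (200119205377216293/20000000000000000000 : ℝ) := by
      linarith [ub6]
    have t7 : (64 : ℝ) * Real.exp (-(1226349/1000000 * Real.sqrt 63)) ≤ (3702764064351241/976562500000000000 : ℝ) := by
      linarith [ub7]
    have t8 : (81 : ℝ) * Real.exp (-(1226349/1000000 * Real.sqrt 80)) ≤ (69785841396928383/50000000000000000000 : ℝ) := by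
      linarith [ub8]
    have t9 : (100 : ℝ) * Real.exp (-(1226349/1000000 * Real.sqrt 99)) ≤ (12550846837643723/25000000000000000000 : ℝ) := by
      linarith [ub9]
    have t10 : (121 : ℝ) * Real.exp (-(1226349/1000000 * Real.sqrt 120)) ≤ (354418418213947021/2000000000000000000000 : ℝ) := by
      linarith [ub10]
    have t11 : (144 : ℝ) * Real.exp (-(1226349/1000000 * Real.sqrt 143)) ≤ (96219104594779611/1562500000000000000000 : ℝ) := by
      linarith [ub11]
    have t12 : (169 : ℝ) * Real.exp (-(1226349/1000000 * Real.sqrt 168)) ≤ (2111830597289945597/100000000000000000000000 : ℝ) := by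
      linarith [ub12]
    have t13 : (196 : ℝ) * Real.exp (-(1226349/1000000 * Real.sqrt 195)) ≤ (1790238952633557573/250000000000000000000000 : ℝ) := by
      linarith [ub13]
    have t14 : (225 : ℝ) * Real.exp (-(1226349/1000000 * Real.sqrt 224)) ≤ (12022938381376089/5000000000000000000000 : ℝ) := by
      linarith [ub14]
    have t15 : (256 : ℝ) * Real.exp (-(1226349/1000000 * Real.sqrt 255)) ≤ (7818191304736301/9765625000000000000000 : ℝ) := by
      linarith [ub15]
    have t16 : (289 : ℝ) * Real.exp (-(1226349/1000000 * Real.sqrt 288)) ≤ (6613796017837462879/25000000000000000000000000 : ℝ) := by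
      linarith [ub16]
    have t17 : (324 : ℝ) * Real.exp (-(1226349/1000000 * Real.sqrt 323)) ≤ (1085508553364201421/12500000000000000000000000 : ℝ) := by
      linarith [ub17]
    have t18 : (361 : ℝ) * Real.exp (-(1226349/1000000 * Real.sqrt 360)) ≤ (3542130393867041391/125000000000000000000000000 : ℝ) := by
      linarith [ub18]
    simp only [Finset.sum_range_succ, Finset.sum_range_zero, Nat.succPNat_coe, Ek]
    norm_num
    linarith [t1, t2, t3, t4, t5, t6, t7, t8, t9, t10, t11, t12, t13, t14, t15, t16, t17, t18]
  have hs2 : Summable (fun n : ℕ => ((((Nat.succPNat (n + 18)) : ℕ) : ℝ) + 1) ^ 2 * Real.exp (-(1226349/1000000 : ℝ) * Ek (Nat.succPNat (n + 18)))) :=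
    (summable_nat_add_iff 18).2 ((Equiv.summable_iff Equiv.pnatEquivNat.symm).2 hs)
  have htail : (∑' n : ℕ, ((((Nat.succPNat (n + 18)) : ℕ) : ℝ) + 1) ^ 2 * Real.exp (-(1226349/1000000 : ℝ) * Ek (Nat.succPNat (n + 18)))) ≤ (1216559/1000000000000 : ℝ) :=
    tail_le _ (by norm_num) _ w2_nonneg w2_le3 hs2
  rw [hdec]; linarith [hhead, htail]

lemma N_up : (∑' k : ℕ+, (((k : ℕ) : ℝ) + 1) ^ 2 * Real.log (((k : ℕ) : ℝ) + 1) * Real.exp (-(613163/500000 : ℝ) * Ek k)) ≤ (1008337506849/1000000000000 : ℝ) := by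
  have hs : Summable (fun k : ℕ+ => (((k : ℕ) : ℝ) + 1) ^ 2 * Real.log (((k : ℕ) : ℝ) + 1) * Real.exp (-(613163/500000 : ℝ) * Ek k)) :=
    summable_main _ (by norm_num) _ wlog_abs
  have hdec : (∑' k : ℕ+, (((k : ℕ) : ℝ) + 1) ^ 2 * Real.log (((k : ℕ) : ℝ) + 1) * Real.exp (-(613163/500000 : ℝ) * Ek k)) = (∑ i ∈ Finset.range 18, ((((Nat.succPNat i) : ℕ) : ℝ) + 1) ^ 2 * Real.log ((((Nat.succPNat i) : ℕ) : ℝ) + 1) * Real.exp (-(613163/500000 : ℝ) * Ek (Nat.succPNat i))) + (∑' n : ℕ, ((((Nat.succPNat (n + 18)) : ℕ) : ℝ) + 1) ^ 2 * Real.log ((((Nat.succPNat (n + 18)) : ℕ) : ℝ) + 1) * Real.exp (-(613163/500000 : ℝ) * Ek (Nat.succPNat (n + 18)))) := pnat_decomp _ hs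
  have hhead : (∑ i ∈ Finset.range 18, ((((Nat.succPNat i) : ℕ) : ℝ) + 1) ^ 2 * Real.log ((((Nat.succPNat i) : ℕ) : ℝ) + 1) * Real.exp (-(613163/500000 : ℝ) * Ek (Nat.succPNat i))) ≤ (504168145144991287357052428740172454887/500000000000000000000000000000000000000 : ℝ) := by
    have t1 : (4 : ℝ) * Real.log 2 * Real.exp (-(613163/500000 * Real.sqrt 3)) ≤ (103578209137457431902805209/312500000000000000000000000 : ℝ) := by
      have hm := mul_le_mul lgu2 ua1 (Real.exp_pos _).le (by norm_num : (0:ℝ) ≤ (8664339757/12500000000 : ℝ))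
      linarith
    have t2 : (9 : ℝ) * Real.log 3 * Real.exp (-(613163/500000 * Real.sqrt 8)) ≤ (308109106715183640054024538779/1000000000000000000000000000000 : ℝ) := by
      have hm := mul_le_mul lgu3 ua2 (Real.exp_pos _).le (by norm_num : (0:ℝ) ≤ (1098612288669/1000000000000 : ℝ))
      linarith
    have t3 : (16 : ℝ) * Real.log 4 * Real.exp (-(613163/500000 * Real.sqrt 15)) ≤ (2399862539162474142053671869/12500000000000000000000000000 : ℝ) := by
      have hm := mul_le_mul lgu4 ua3 (Real.exp_pos _).le (by norm_num : (0:ℝ) ≤ (693147180561/500000000000 : ℝ))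
      linarith
    have t4 : (25 : ℝ) * Real.log 5 * Real.exp (-(613163/500000 * Real.sqrt 24)) ≤ (989653933542814081388148221/10000000000000000000000000000 : ℝ) := by
      have hm := mul_le_mul lgu5 ua4 (Real.exp_pos _).le (by norm_num : (0:ℝ) ≤ (40235947811/25000000000 : ℝ))
      linarith
    have t5 : (36 : ℝ) * Real.log 6 * Real.exp (-(613163/500000 * Real.sqrt 35)) ≤ (284863884056852756938231517181/6250000000000000000000000000000 : ℝ) := by
      have hm := mul_le_mul lgu6 ua5 (Real.exp_pos _).le (by norm_num : (0:ℝ) ≤ (1791759469239/1000000000000 : ℝ))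
      linarith
    have t6 : (49 : ℝ) * Real.log 7 * Real.exp (-(613163/500000 * Real.sqrt 48)) ≤ (973690125731887533392750937057/50000000000000000000000000000000 : ℝ) := by
      have hm := mul_le_mul lgu7 ua6 (Real.exp_pos _).le (by norm_num : (0:ℝ) ≤ (972955074537/500000000000 : ℝ))
      linarith
    have t7 : (64 : ℝ) * Real.log 8 * Real.exp (-(613163/500000 * Real.sqrt 63)) ≤ (6160869736995962831942078577/781250000000000000000000000000 : ℝ) := by
      have hm := mul_le_mul lgu8 ua7 (Real.exp_pos _).le (by norm_num : (0:ℝ) ≤ (207944154171/100000000000 : ℝ))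
      linarith
    have t8 : (81 : ℝ) * Real.log 9 * Real.exp (-(613163/500000 * Real.sqrt 80)) ≤ (3067334258148191926868258187/1000000000000000000000000000000 : ℝ) := by
      have hm := mul_le_mul lgu9 ua8 (Real.exp_pos _).le (by norm_num : (0:ℝ) ≤ (109861228869/50000000000 : ℝ))
      linarith
    have t9 : (100 : ℝ) * Real.log 10 * Real.exp (-(613163/500000 * Real.sqrt 99)) ≤ (57812014227248405157948900931/50000000000000000000000000000000 : ℝ) := by
      have hm := mul_le_mul lgu10 ua9 (Real.exp_pos _).le (by norm_num : (0:ℝ) ≤ (1151292546527/500000000000 : ℝ))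
      linarith
    have t10 : (121 : ℝ) * Real.log 11 * Real.exp (-(613163/500000 * Real.sqrt 120)) ≤ (2125180998421083232758553700121/5000000000000000000000000000000000 : ℝ) := by
      have hm := mul_le_mul lgu11 ua10 (Real.exp_pos _).le (by norm_num : (0:ℝ) ≤ (1198947636439/500000000000 : ℝ))
      linarith
    have t11 : (144 : ℝ) * Real.log 12 * Real.exp (-(613163/500000 * Real.sqrt 143)) ≤ (47832252437354253365917549773/312500000000000000000000000000000 : ℝ) := by
      have hm := mul_le_mul lgu12 ua11 (Real.exp_pos _).le (by norm_num : (0:ℝ) ≤ (248490664989/100000000000 : ℝ))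
      linarith
    have t12 : (169 : ℝ) * Real.log 13 * Real.exp (-(613163/500000 * Real.sqrt 168)) ≤ (270917678002579332555534620397/5000000000000000000000000000000000 : ℝ) := by
      have hm := mul_le_mul lgu13 ua12 (Real.exp_pos _).le (by norm_num : (0:ℝ) ≤ (641237339397/250000000000 : ℝ))
      linarith
    have t13 : (196 : ℝ) * Real.log 14 * Real.exp (-(613163/500000 * Real.sqrt 195)) ≤ (4726060861776611849611093793077/250000000000000000000000000000000000 : ℝ) := by
      have hm := mul_le_mul lgu14 ua13 (Real.exp_pos _).le (by norm_num : (0:ℝ) ≤ (2639057329769/1000000000000 : ℝ))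
      linarith
    have t14 : (225 : ℝ) * Real.log 15 * Real.exp (-(613163/500000 * Real.sqrt 224)) ≤ (65139860179461696862181524983/10000000000000000000000000000000000 : ℝ) := by
      have hm := mul_le_mul lgu15 ua14 (Real.exp_pos _).le (by norm_num : (0:ℝ) ≤ (1354025100643/500000000000 : ℝ))
      linarith
    have t15 : (256 : ℝ) * Real.log 16 * Real.exp (-(613163/500000 * Real.sqrt 255)) ≤ (5421147898203026038633241861/2441406250000000000000000000000000 : ℝ) := by
      have hm := mul_le_mul lgu16 ua15 (Real.exp_pos _).le (by norm_num : (0:ℝ) ≤ (346573590307/125000000000 : ℝ))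
      linarith
    have t16 : (289 : ℝ) * Real.log 17 * Real.exp (-(613163/500000 * Real.sqrt 288)) ≤ (37491220294103124190345185845009/50000000000000000000000000000000000000 : ℝ) := by
      have hm := mul_le_mul lgu17 ua16 (Real.exp_pos _).le (by norm_num : (0:ℝ) ≤ (2833213344307/1000000000000 : ℝ))
      linarith
    have t17 : (324 : ℝ) * Real.log 18 * Real.exp (-(613163/500000 * Real.sqrt 323)) ≤ (784705091485895237569350168711/3125000000000000000000000000000000000 : ℝ) := by
      have hm := mul_le_mul lgu18 ua17 (Real.exp_pos _).le (by norm_num : (0:ℝ) ≤ (361296469773/125000000000 : ℝ))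
      linarith
    have t18 : (361 : ℝ) * Real.log 19 * Real.exp (-(613163/500000 * Real.sqrt 360)) ≤ (41736555024292883125192189974237/500000000000000000000000000000000000000 : ℝ) := by
      have hm := mul_le_mul lgu19 ua18 (Real.exp_pos _).le (by norm_num : (0:ℝ) ≤ (1472219489747/500000000000 : ℝ))
      linarith
    simp only [Finset.sum_range_succ, Finset.sum_range_zero, Nat.succPNat_coe, Ek]
    norm_num
    linarith [t1, t2, t3, t4, t5, t6, t7, t8, t9, t10, t11, t12, t13, t14, t15, t16, t17, t18]
  have hs2 : Summable (fun n : ℕ => ((((Nat.succPNat (n + 18)) : ℕ) : ℝ) + 1) ^ 2 * Real.log ((((Nat.succPNat (n + 18)) : ℕ) : ℝ) + 1) * Real.exp (-(613163/500000 : ℝ) * Ek (Nat.succPNat (n + 18)))) :=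
    (summable_nat_add_iff 18).2 ((Equiv.summable_iff Equiv.pnatEquivNat.symm).2 hs)
  have htail : (∑' n : ℕ, ((((Nat.succPNat (n + 18)) : ℕ) : ℝ) + 1) ^ 2 * Real.log ((((Nat.succPNat (n + 18)) : ℕ) : ℝ) + 1) * Real.exp (-(613163/500000 : ℝ) * Ek (Nat.succPNat (n + 18)))) ≤ (1216559/1000000000000 : ℝ) :=
    tail_le _ (by norm_num) _ wlog_nonneg wlog_le3 hs2
  rw [hdec]; linarith [hhead, htail]

lemma N_lo : ((504131269877/500000000000 : ℝ)) ≤ ∑' k : ℕ+, (((k : ℕ) : ℝ) + 1) ^ 2 * Real.log (((k : ℕ) : ℝ) + 1) * Real.exp (-(1226349/1000000 : ℝ) * Ek k) := by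
  have hs : Summable (fun k : ℕ+ => (((k : ℕ) : ℝ) + 1) ^ 2 * Real.log (((k : ℕ) : ℝ) + 1) * Real.exp (-(1226349/1000000 : ℝ) * Ek k)) :=
    summable_main _ (by norm_num) _ wlog_abs
  have hdec : (∑' k : ℕ+, (((k : ℕ) : ℝ) + 1) ^ 2 * Real.log (((k : ℕ) : ℝ) + 1) * Real.exp (-(1226349/1000000 : ℝ) * Ek k)) = (∑ i ∈ Finset.range 18, ((((Nat.succPNat i) : ℕ) : ℝ) + 1) ^ 2 * Real.log ((((Nat.succPNat i) : ℕ) : ℝ) + 1) * Real.exp (-(1226349/1000000 : ℝ) * Ek (Nat.succPNat i))) + (∑' n : ℕ, ((((Nat.succPNat (n + 18)) : ℕ) : ℝ) + 1) ^ 2 * Real.log ((((Nat.succPNat (n + 18)) : ℕ) : ℝ) + 1) * Real.exp (-(1226349/1000000 : ℝ) * Ek (Nat.succPNat (n + 18)))) := pnat_decomp _ hs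
  have hhead : ((100826253975449056895007102573963312003/100000000000000000000000000000000000000 : ℝ)) ≤ (∑ i ∈ Finset.range 18, ((((Nat.succPNat i) : ℕ) : ℝ) + 1) ^ 2 * Real.log ((((Nat.succPNat i) : ℕ) : ℝ) + 1) * Real.exp (-(1226349/1000000 : ℝ) * Ek (Nat.succPNat i))) := by
    have t1 : ((8285926633301237768106768697/25000000000000000000000000000 : ℝ)) ≤ (4 : ℝ) * Real.log 2 * Real.exp (-(1226349/1000000 * Real.sqrt 3)) := by
      have hm := mul_le_mul lgl2 lb1 (by norm_num : (0:ℝ) ≤ (11954065263049783/100000000000000000 : ℝ)) (Real.log_nonneg (by norm_num))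
      linarith
    have t2 : ((1925556632399822904063770211/6250000000000000000000000000 : ℝ)) ≤ (9 : ℝ) * Real.log 3 * Real.exp (-(1226349/1000000 * Real.sqrt 8)) := by
      have hm := mul_le_mul lgl3 lb2 (by norm_num : (0:ℝ) ≤ (973731766614863/31250000000000000 : ℝ)) (Real.log_nonneg (by norm_num))
      linarith
    have t3 : ((119982430259034993023585492517/625000000000000000000000000000 : ℝ)) ≤ (16 : ℝ) * Real.log 4 * Real.exp (-(1226349/1000000 * Real.sqrt 15)) := by
      have hm := mul_le_mul lgl4 lb3 (by norm_num : (0:ℝ) ≤ (86549028565062631/10000000000000000000 : ℝ)) (Real.log_nonneg (by norm_num))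
      linarith
    have t4 : ((39581683455500736417137625219/400000000000000000000000000000 : ℝ)) ≤ (25 : ℝ) * Real.log 5 * Real.exp (-(1226349/1000000 * Real.sqrt 24)) := by
      have hm := mul_le_mul lgl5 lb4 (by norm_num : (0:ℝ) ≤ (24593482700119181/10000000000000000000 : ℝ)) (Real.log_nonneg (by norm_num))
      linarith
    have t5 : ((113929908048737653082288035149/2500000000000000000000000000000 : ℝ)) ≤ (36 : ℝ) * Real.log 6 * Real.exp (-(1226349/1000000 * Real.sqrt 35)) := by
      have hm := mul_le_mul lgl6 lb5 (by norm_num : (0:ℝ) ≤ (35325273536999731/50000000000000000000 : ℝ)) (Real.log_nonneg (by norm_num))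
      linarith
    have t6 : ((194706290884914690876986848647/10000000000000000000000000000000 : ℝ)) ≤ (49 : ℝ) * Real.log 7 * Real.exp (-(1226349/1000000 * Real.sqrt 48)) := by
      have hm := mul_le_mul lgl7 lb6 (by norm_num : (0:ℝ) ≤ (4084050618015081/20000000000000000000 : ℝ)) (Real.log_nonneg (by norm_num))
      linarith
    have t7 : ((30798447567018918781758679539/3906250000000000000000000000000 : ℝ)) ≤ (64 : ℝ) * Real.log 8 * Real.exp (-(1226349/1000000 * Real.sqrt 63)) := by
      have hm := mul_le_mul lgl8 lb7 (by norm_num : (0:ℝ) ≤ (59243690101829931/1000000000000000000000 : ℝ)) (Real.log_nonneg (by norm_num))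
      linarith
    have t8 : ((1533320922434133141825971615289/500000000000000000000000000000000 : ℝ)) ≤ (81 : ℝ) * Real.log 9 * Real.exp (-(1226349/1000000 * Real.sqrt 80)) := by
      have hm := mul_le_mul lgl9 lb8 (by norm_num : (0:ℝ) ≤ (17230726553044751/1000000000000000000000 : ℝ)) (Real.log_nonneg (by norm_num))
      linarith
    have t9 : ((115592871069229741656902123029/100000000000000000000000000000000 : ℝ)) ≤ (100 : ℝ) * Real.log 10 * Real.exp (-(1226349/1000000 * Real.sqrt 99)) := by
      have hm := mul_le_mul lgl10 lb9 (by norm_num : (0:ℝ) ≤ (50201346061725809/10000000000000000000000 : ℝ)) (Real.log_nonneg (by norm_num))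
      linarith
    have t10 : ((531120660298802994449435319639/1250000000000000000000000000000000 : ℝ)) ≤ (121 : ℝ) * Real.log 11 * Real.exp (-(1226349/1000000 * Real.sqrt 120)) := by
      have hm := mul_le_mul lgl11 lb10 (by norm_num : (0:ℝ) ≤ (7322132864452993/5000000000000000000000 : ℝ)) (Real.log_nonneg (by norm_num))
      linarith
    have t11 : ((186767883273196927989652779/1220703125000000000000000000000 : ℝ)) ≤ (144 : ℝ) * Real.log 12 * Real.exp (-(1226349/1000000 * Real.sqrt 143)) := by
      have hm := mul_le_mul lgl12 lb11 (by norm_num : (0:ℝ) ≤ (4275821533755169/10000000000000000000000 : ℝ)) (Real.log_nonneg (by norm_num))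
      linarith
    have t12 : ((541548942017523037299080338973/10000000000000000000000000000000000 : ℝ)) ≤ (169 : ℝ) * Real.log 13 * Real.exp (-(1226349/1000000 * Real.sqrt 168)) := by
      have hm := mul_le_mul lgl13 lb12 (by norm_num : (0:ℝ) ≤ (12493157423705663/100000000000000000000000 : ℝ)) (Real.log_nonneg (by norm_num))
      linarith
    have t13 : ((2361388512903952517012095633439/125000000000000000000000000000000000 : ℝ)) ≤ (196 : ℝ) * Real.log 14 * Real.exp (-(1226349/1000000 * Real.sqrt 195)) := by
      have hm := mul_le_mul lgl14 lb13 (by norm_num : (0:ℝ) ≤ (36521830566346643/1000000000000000000000000 : ℝ)) (Real.log_nonneg (by norm_num))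
      linarith
    have t14 : ((32539693938644278225521638271/5000000000000000000000000000000000 : ℝ)) ≤ (225 : ℝ) * Real.log 15 * Real.exp (-(1226349/1000000 * Real.sqrt 224)) := by
      have hm := mul_le_mul lgl15 lb14 (by norm_num : (0:ℝ) ≤ (2670202752489507/250000000000000000000000 : ℝ)) (Real.log_nonneg (by norm_num))
      linarith
    have t15 : ((10828721915555204952433640421/4882812500000000000000000000000000 : ℝ)) ≤ (256 : ℝ) * Real.log 16 * Real.exp (-(1226349/1000000 * Real.sqrt 255)) := by
      have hm := mul_le_mul lgl16 lb15 (by norm_num : (0:ℝ) ≤ (15622543415142783/5000000000000000000000000 : ℝ)) (Real.log_nonneg (by norm_num))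
      linarith
    have t16 : ((2339233162643660152082724310441/3125000000000000000000000000000000000 : ℝ)) ≤ (289 : ℝ) * Real.log 17 * Real.exp (-(1226349/1000000 * Real.sqrt 288)) := by
      have hm := mul_le_mul lgl17 lb16 (by norm_num : (0:ℝ) ≤ (11427635576573149/12500000000000000000000000 : ℝ)) (Real.log_nonneg (by norm_num))
      linarith
    have t17 : ((1565822056385567994461748387441/6250000000000000000000000000000000000 : ℝ)) ≤ (324 : ℝ) * Real.log 18 * Real.exp (-(1226349/1000000 * Real.sqrt 323)) := by
      have hm := mul_le_mul lgl18 lb17 (by norm_num : (0:ℝ) ≤ (6688114239658123/25000000000000000000000000 : ℝ)) (Real.log_nonneg (by norm_num))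
      linarith
    have t18 : ((1664337181899989385759556291111/20000000000000000000000000000000000000 : ℝ)) ≤ (361 : ℝ) * Real.log 19 * Real.exp (-(1226349/1000000 * Real.sqrt 360)) := by
      have hm := mul_le_mul lgl19 lb18 (by norm_num : (0:ℝ) ≤ (3131565870844867/40000000000000000000000000 : ℝ)) (Real.log_nonneg (by norm_num))
      linarith
    simp only [Finset.sum_range_succ, Finset.sum_range_zero, Nat.succPNat_coe, Ek]
    norm_num
    linarith [t1, t2, t3, t4, t5, t6, t7, t8, t9, t10, t11, t12, t13, t14, t15, t16, t17, t18]
  have htail : (0:ℝ) ≤ (∑' n : ℕ, ((((Nat.succPNat (n + 18)) : ℕ) : ℝ) + 1) ^ 2 * Real.log ((((Nat.succPNat (n + 18)) : ℕ) : ℝ) + 1) * Real.exp (-(1226349/1000000 : ℝ) * Ek (Nat.succPNat (n + 18)))) :=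
    tsum_nonneg (fun n => mul_nonneg (wlog_nonneg _) (Real.exp_pos _).le)
  rw [hdec]
  have : ((504131269877/500000000000 : ℝ) : ℝ) ≤ (100826253975449056895007102573963312003/100000000000000000000000000000000000000 : ℝ) := by norm_num
  linarith [hhead, htail]

lemma D_up : (∑' k : ℕ+, (((k : ℕ) : ℝ) + 1) ^ 2 * Real.sqrt (((k : ℕ) : ℝ) * (((k : ℕ) : ℝ) + 2)) * Real.exp (-(613163/500000 : ℝ) * Ek k)) ≤ (2729607486503/1000000000000 : ℝ) := by
  have hs : Summable (fun k : ℕ+ => (((k : ℕ) : ℝ) + 1) ^ 2 * Real.sqrt (((k : ℕ) : ℝ) * (((k : ℕ) : ℝ) + 2)) * Real.exp (-(613163/500000 : ℝ) * Ek k)) :=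
    summable_main _ (by norm_num) _ wE_abs
  have hdec : (∑' k : ℕ+, (((k : ℕ) : ℝ) + 1) ^ 2 * Real.sqrt (((k : ℕ) : ℝ) * (((k : ℕ) : ℝ) + 2)) * Real.exp (-(613163/500000 : ℝ) * Ek k)) = (∑ i ∈ Finset.range 18, ((((Nat.succPNat i) : ℕ) : ℝ) + 1) ^ 2 * Real.sqrt ((((Nat.succPNat i) : ℕ) : ℝ) * ((((Nat.succPNat i) : ℕ) : ℝ) + 2)) * Real.exp (-(613163/500000 : ℝ) * Ek (Nat.succPNat i))) + (∑' n : ℕ, ((((Nat.succPNat (n + 18)) : ℕ) : ℝ) + 1) ^ 2 * Real.sqrt ((((Nat.succPNat (n + 18)) : ℕ) : ℝ) * ((((Nat.succPNat (n + 18)) : ℕ) : ℝ) + 2)) * Real.exp (-(613163/500000 : ℝ) * Ek (Nat.succPNat (n + 18)))) := pnat_decomp _ hs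
  have hhead : (∑ i ∈ Finset.range 18, ((((Nat.succPNat i) : ℕ) : ℝ) + 1) ^ 2 * Real.sqrt ((((Nat.succPNat i) : ℕ) : ℝ) * ((((Nat.succPNat i) : ℕ) : ℝ) + 2)) * Real.exp (-(613163/500000 : ℝ) * Ek (Nat.succPNat i))) ≤ (27296062699435415527084647483527350041/10000000000000000000000000000000000000 : ℝ) := by
    have t1 : (4 : ℝ) * Real.sqrt 3 * Real.exp (-(613163/500000 * Real.sqrt 3)) ≤ (51764683120070900844371103/62500000000000000000000000 : ℝ) := by
      have hm := mul_le_mul sU1 ua1 (Real.exp_pos _).le (by norm_num : (0:ℝ) ≤ (4330127019/2500000000 : ℝ))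
      linarith
    have t2 : (9 : ℝ) * Real.sqrt 8 * Real.exp (-(613163/500000 * Real.sqrt 8)) ≤ (495775536453655785366799023/625000000000000000000000000 : ℝ) := by
      have hm := mul_le_mul sU2 ua2 (Real.exp_pos _).le (by norm_num : (0:ℝ) ≤ (1767766953/625000000 : ℝ))
      linarith
    have t3 : (16 : ℝ) * Real.sqrt 15 * Real.exp (-(613163/500000 * Real.sqrt 15)) ≤ (134093132140606403231565227/250000000000000000000000000 : ℝ) := by
      have hm := mul_le_mul sU3 ua3 (Real.exp_pos _).le (by norm_num : (0:ℝ) ≤ (38729833463/10000000000 : ℝ))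
      linarith
    have t4 : (25 : ℝ) * Real.sqrt 24 * Real.exp (-(613163/500000 * Real.sqrt 24)) ≤ (150620731647836610534448027/500000000000000000000000000 : ℝ) := by
      have hm := mul_le_mul sU4 ua4 (Real.exp_pos _).le (by norm_num : (0:ℝ) ≤ (6123724357/1250000000 : ℝ))
      linarith
    have t5 : (36 : ℝ) * Real.sqrt 35 * Real.exp (-(613163/500000 * Real.sqrt 35)) ≤ (9405712621236285341423930349/62500000000000000000000000000 : ℝ) := by
      have hm := mul_le_mul sU5 ua5 (Real.exp_pos _).le (by norm_num : (0:ℝ) ≤ (59160797831/10000000000 : ℝ))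
      linarith
    have t6 : (49 : ℝ) * Real.sqrt 48 * Real.exp (-(613163/500000 * Real.sqrt 48)) ≤ (69334373713165100284691976183/1000000000000000000000000000000 : ℝ) := by
      have hm := mul_le_mul sU6 ua6 (Real.exp_pos _).le (by norm_num : (0:ℝ) ≤ (69282032303/10000000000 : ℝ))
      linarith
    have t7 : (64 : ℝ) * Real.sqrt 63 * Real.exp (-(613163/500000 * Real.sqrt 63)) ≤ (587902888480475122761671571/19531250000000000000000000000 : ℝ) := by
      have hm := mul_le_mul sU7 ua7 (Real.exp_pos _).le (by norm_num : (0:ℝ) ≤ (19843134833/2500000000 : ℝ))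
      linarith
    have t8 : (81 : ℝ) * Real.sqrt 80 * Real.exp (-(613163/500000 * Real.sqrt 80)) ≤ (24972478394948147144939193/2000000000000000000000000000 : ℝ) := by
      have hm := mul_le_mul sU8 ua8 (Real.exp_pos _).le (by norm_num : (0:ℝ) ≤ (894427191/100000000 : ℝ))
      linarith
    have t9 : (100 : ℝ) * Real.sqrt 99 * Real.exp (-(613163/500000 * Real.sqrt 99)) ≤ (4996317230026273094032871683/1000000000000000000000000000000 : ℝ) := by
      have hm := mul_le_mul sU9 ua9 (Real.exp_pos _).le (by norm_num : (0:ℝ) ≤ (99498743711/10000000000 : ℝ))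
      linarith
    have t10 : (121 : ℝ) * Real.sqrt 120 * Real.exp (-(613163/500000 * Real.sqrt 120)) ≤ (97085939056027606838296685289/50000000000000000000000000000000 : ℝ) := by
      have hm := mul_le_mul sU10 ua10 (Real.exp_pos _).le (by norm_num : (0:ℝ) ≤ (54772255751/5000000000 : ℝ))
      linarith
    have t11 : (144 : ℝ) * Real.sqrt 143 * Real.exp (-(613163/500000 * Real.sqrt 143)) ≤ (2877324117013441619260207353/3906250000000000000000000000000 : ℝ) := by
      have hm := mul_le_mul sU11 ua11 (Real.exp_pos _).le (by norm_num : (0:ℝ) ≤ (14947825929/1250000000 : ℝ))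
      linarith
    have t12 : (169 : ℝ) * Real.sqrt 168 * Real.exp (-(613163/500000 * Real.sqrt 168)) ≤ (54761228452851458164334650969/200000000000000000000000000000000 : ℝ) := by
      have hm := mul_le_mul sU12 ua12 (Real.exp_pos _).le (by norm_num : (0:ℝ) ≤ (129614813969/10000000000 : ℝ))
      linarith
    have t13 : (196 : ℝ) * Real.sqrt 195 * Real.exp (-(613163/500000 * Real.sqrt 195)) ≤ (125036784140709818206051652927/1250000000000000000000000000000000 : ℝ) := by
      have hm := mul_le_mul sU13 ua13 (Real.exp_pos _).le (by norm_num : (0:ℝ) ≤ (69821200219/5000000000 : ℝ))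
      linarith
    have t14 : (225 : ℝ) * Real.sqrt 224 * Real.exp (-(613163/500000 * Real.sqrt 224)) ≤ (7200192637440190394128034451/200000000000000000000000000000000 : ℝ) := by
      have hm := mul_le_mul sU14 ua14 (Real.exp_pos _).le (by norm_num : (0:ℝ) ≤ (149666295471/10000000000 : ℝ))
      linarith
    have t15 : (256 : ℝ) * Real.sqrt 255 * Real.exp (-(613163/500000 * Real.sqrt 255)) ≤ (2497847272744586021623220021/195312500000000000000000000000000 : ℝ) := by
      have hm := mul_le_mul sU15 ua15 (Real.exp_pos _).le (by norm_num : (0:ℝ) ≤ (159687194227/10000000000 : ℝ))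
      linarith
    have t16 : (289 : ℝ) * Real.sqrt 288 * Real.exp (-(613163/500000 * Real.sqrt 288)) ≤ (449134625034415713001356259539/100000000000000000000000000000000000 : ℝ) := by
      have hm := mul_le_mul sU16 ua16 (Real.exp_pos _).le (by norm_num : (0:ℝ) ≤ (33941125497/2000000000 : ℝ))
      linarith
    have t17 : (324 : ℝ) * Real.sqrt 323 * Real.exp (-(613163/500000 * Real.sqrt 323)) ≤ (390340859047562283819561535599/250000000000000000000000000000000000 : ℝ) := by
      have hm := mul_le_mul sU17 ua17 (Real.exp_pos _).le (by norm_num : (0:ℝ) ≤ (179722007557/10000000000 : ℝ))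
      linarith
    have t18 : (361 : ℝ) * Real.sqrt 360 * Real.exp (-(613163/500000 * Real.sqrt 360)) ≤ (5378922497039417670829347000981/10000000000000000000000000000000000000 : ℝ) := by
      have hm := mul_le_mul sU18 ua18 (Real.exp_pos _).le (by norm_num : (0:ℝ) ≤ (189736659611/10000000000 : ℝ))
      linarith
    simp only [Finset.sum_range_succ, Finset.sum_range_zero, Nat.succPNat_coe, Ek]
    norm_num
    linarith [t1, t2, t3, t4, t5, t6, t7, t8, t9, t10, t11, t12, t13, t14, t15, t16, t17, t18]
  have hs2 : Summable (fun n : ℕ => ((((Nat.succPNat (n + 18)) : ℕ) : ℝ) + 1) ^ 2 * Real.sqrt ((((Nat.succPNat (n + 18)) : ℕ) : ℝ) * ((((Nat.succPNat (n + 18)) : ℕ) : ℝ) + 2)) * Real.exp (-(613163/500000 : ℝ) * Ek (Nat.succPNat (n + 18)))) :=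
    (summable_nat_add_iff 18).2 ((Equiv.summable_iff Equiv.pnatEquivNat.symm).2 hs)
  have htail : (∑' n : ℕ, ((((Nat.succPNat (n + 18)) : ℕ) : ℝ) + 1) ^ 2 * Real.sqrt ((((Nat.succPNat (n + 18)) : ℕ) : ℝ) * ((((Nat.succPNat (n + 18)) : ℕ) : ℝ) + 2)) * Real.exp (-(613163/500000 : ℝ) * Ek (Nat.succPNat (n + 18)))) ≤ (1216559/1000000000000 : ℝ) :=
    tail_le _ (by norm_num) _ wE_nonneg wE_le3 hs2
  rw [hdec]; linarith [hhead, htail]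

lemma D_lo : ((1364698348357/500000000000 : ℝ)) ≤ ∑' k : ℕ+, (((k : ℕ) : ℝ) + 1) ^ 2 * Real.sqrt (((k : ℕ) : ℝ) * (((k : ℕ) : ℝ) + 2)) * Real.exp (-(1226349/1000000 : ℝ) * Ek k) := by
  have hs : Summable (fun k : ℕ+ => (((k : ℕ) : ℝ) + 1) ^ 2 * Real.sqrt (((k : ℕ) : ℝ) * (((k : ℕ) : ℝ) + 2)) * Real.exp (-(1226349/1000000 : ℝ) * Ek k)) :=
    summable_main _ (by norm_num) _ wE_abs
  have hdec : (∑' k : ℕ+, (((k : ℕ) : ℝ) + 1) ^ 2 * Real.sqrt (((k : ℕ) : ℝ) * (((k : ℕ) : ℝ) + 2)) * Real.exp (-(1226349/1000000 : ℝ) * Ek k)) = (∑ i ∈ Finset.range 18, ((((Nat.succPNat i) : ℕ) : ℝ) + 1) ^ 2 * Real.sqrt ((((Nat.succPNat i) : ℕ) : ℝ) * ((((Nat.succPNat i) : ℕ) : ℝ) + 2)) * Real.exp (-(1226349/1000000 : ℝ) * Ek (Nat.succPNat i))) + (∑' n : ℕ, ((((Nat.succPNat (n + 18)) : ℕ) :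 ℝ) + 1) ^ 2 * Real.sqrt ((((Nat.succPNat (n + 18)) : ℕ) : ℝ) * ((((Nat.succPNat (n + 18)) : ℕ) : ℝ) + 2)) * Real.exp (-(1226349/1000000 : ℝ) * Ek (Nat.succPNat (n + 18)))) := pnat_decomp _ hs
  have hhead : ((109175867868575313103958173758292771/40000000000000000000000000000000000 : ℝ)) ≤ (∑ i ∈ Finset.range 18, ((((Nat.succPNat i) : ℕ) : ℝ) + 1) ^ 2 * Real.sqrt ((((Nat.succPNat i) : ℕ) : ℝ) * ((((Nat.succPNat i) : ℕ) : ℝ) + 2)) * Real.exp (-(1226349/1000000 : ℝ) * Ek (Nat.succPNat i))) := by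
    have t1 : ((8282019356709230623139909/10000000000000000000000000 : ℝ)) ≤ (4 : ℝ) * Real.sqrt 3 * Real.exp (-(1226349/1000000 * Real.sqrt 3)) := by
      have hm := mul_le_mul sL1 lb1 (by norm_num : (0:ℝ) ≤ (11954065263049783/100000000000000000 : ℝ)) (Real.sqrt_nonneg _)
      linarith
    have t2 : ((247871640678797556663697449/312500000000000000000000000 : ℝ)) ≤ (9 : ℝ) * Real.sqrt 8 * Real.exp (-(1226349/1000000 * Real.sqrt 8)) := by
      have hm := mul_le_mul sL2 lb2 (by norm_num : (0:ℝ) ≤ (973731766614863/31250000000000000 : ℝ)) (Real.sqrt_nonneg _)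
      linarith
    have t3 : ((1676014731311378265114779261/3125000000000000000000000000 : ℝ)) ≤ (16 : ℝ) * Real.sqrt 15 * Real.exp (-(1226349/1000000 * Real.sqrt 15)) := by
      have hm := mul_le_mul sL3 lb3 (by norm_num : (0:ℝ) ≤ (86549028565062631/10000000000000000000 : ℝ)) (Real.sqrt_nonneg _)
      linarith
    have t4 : ((240965934449766032248122751/800000000000000000000000000 : ℝ)) ≤ (25 : ℝ) * Real.sqrt 24 * Real.exp (-(1226349/1000000 * Real.sqrt 24)) := by
      have hm := mul_le_mul sL4 lb4 (by norm_num : (0:ℝ) ≤ (24593482700119181/10000000000000000000 : ℝ)) (Real.sqrt_nonneg _)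
      linarith
    have t5 : ((1880884229410701099409845357/12500000000000000000000000000 : ℝ)) ≤ (36 : ℝ) * Real.sqrt 35 * Real.exp (-(1226349/1000000 * Real.sqrt 35)) := by
      have hm := mul_le_mul sL5 lb5 (by norm_num : (0:ℝ) ≤ (35325273536999731/50000000000000000000 : ℝ)) (Real.sqrt_nonneg _)
      linarith
    have t6 : ((6932307507587935671646088319/100000000000000000000000000000 : ℝ)) ≤ (49 : ℝ) * Real.sqrt 48 * Real.exp (-(1226349/1000000 * Real.sqrt 48)) := by
      have hm := mul_le_mul sL6 lb6 (by norm_num : (0:ℝ) ≤ (4084050618015081/20000000000000000000 : ℝ)) (Real.sqrt_nonneg _)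
      linarith
    have t7 : ((4702322122721071593370516161/156250000000000000000000000000 : ℝ)) ≤ (64 : ℝ) * Real.sqrt 63 * Real.exp (-(1226349/1000000 * Real.sqrt 63)) := by
      have hm := mul_le_mul sL7 lb7 (by norm_num : (0:ℝ) ≤ (59243690101829931/1000000000000000000000 : ℝ)) (Real.sqrt_nonneg _)
      linarith
    have t8 : ((124834205831408637136421347269/10000000000000000000000000000000 : ℝ)) ≤ (81 : ℝ) * Real.sqrt 80 * Real.exp (-(1226349/1000000 * Real.sqrt 80)) := by
      have hm := mul_le_mul sL8 lb8 (by norm_num : (0:ℝ) ≤ (17230726553044751/1000000000000000000000 : ℝ)) (Real.sqrt_nonneg _)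
      linarith
    have t9 : ((499497086569267410998341139/100000000000000000000000000000 : ℝ)) ≤ (100 : ℝ) * Real.sqrt 99 * Real.exp (-(1226349/1000000 * Real.sqrt 99)) := by
      have hm := mul_le_mul sL9 lb9 (by norm_num : (0:ℝ) ≤ (50201346061725809/10000000000000000000000 : ℝ)) (Real.sqrt_nonneg _)
      linarith
    have t10 : ((97054035601612436857247071653/50000000000000000000000000000000 : ℝ)) ≤ (121 : ℝ) * Real.sqrt 120 * Real.exp (-(1226349/1000000 * Real.sqrt 120)) := by
      have hm := mul_le_mul sL10 lb10 (by norm_num : (0:ℝ) ≤ (7322132864452993/5000000000000000000000 : ℝ)) (Real.sqrt_nonneg _)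
      linarith
    have t11 : ((4601824991244546208146547551/6250000000000000000000000000000 : ℝ)) ≤ (144 : ℝ) * Real.sqrt 143 * Real.exp (-(1226349/1000000 * Real.sqrt 143)) := by
      have hm := mul_le_mul sL11 lb11 (by norm_num : (0:ℝ) ≤ (4275821533755169/10000000000000000000000 : ℝ)) (Real.sqrt_nonneg _)
      linarith
    have t12 : ((17103838033347909689730877031/62500000000000000000000000000000 : ℝ)) ≤ (169 : ℝ) * Real.sqrt 168 * Real.exp (-(1226349/1000000 * Real.sqrt 168)) := by
      have hm := mul_le_mul sL12 lb12 (by norm_num : (0:ℝ) ≤ (12493157423705663/100000000000000000000000 : ℝ)) (Real.sqrt_nonneg _)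
      linarith
    have t13 : ((249899808343264176479877466559/2500000000000000000000000000000000 : ℝ)) ≤ (196 : ℝ) * Real.sqrt 195 * Real.exp (-(1226349/1000000 * Real.sqrt 195)) := by
      have hm := mul_le_mul sL13 lb13 (by norm_num : (0:ℝ) ≤ (36521830566346643/1000000000000000000000000 : ℝ)) (Real.sqrt_nonneg _)
      linarith
    have t14 : ((359675418707011649462969961/10000000000000000000000000000000 : ℝ)) ≤ (225 : ℝ) * Real.sqrt 224 * Real.exp (-(1226349/1000000 * Real.sqrt 224)) := by
      have hm := mul_le_mul sL14 lb14 (by norm_num : (0:ℝ) ≤ (2670202752489507/250000000000000000000000 : ℝ)) (Real.sqrt_nonneg _)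
      linarith
    have t15 : ((1247360062319011469221585479/97656250000000000000000000000000 : ℝ)) ≤ (256 : ℝ) * Real.sqrt 255 * Real.exp (-(1226349/1000000 * Real.sqrt 255)) := by
      have hm := mul_le_mul sL15 lb15 (by norm_num : (0:ℝ) ≤ (15622543415142783/5000000000000000000000000 : ℝ)) (Real.sqrt_nonneg _)
      linarith
    have t16 : ((140116886281564850561267259131/31250000000000000000000000000000000 : ℝ)) ≤ (289 : ℝ) * Real.sqrt 288 * Real.exp (-(1226349/1000000 * Real.sqrt 288)) := by
      have hm := mul_le_mul sL16 lb16 (by norm_num : (0:ℝ) ≤ (11427635576573149/12500000000000000000000000 : ℝ)) (Real.sqrt_nonneg _)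
      linarith
    have t17 : ((24340526687783374627421242107/15625000000000000000000000000000000 : ℝ)) ≤ (324 : ℝ) * Real.sqrt 323 * Real.exp (-(1226349/1000000 * Real.sqrt 323)) := by
      have hm := mul_le_mul sL17 lb17 (by norm_num : (0:ℝ) ≤ (6688114239658123/25000000000000000000000000 : ℝ)) (Real.sqrt_nonneg _)
      linarith
    have t18 : ((21449639801348565686719459507/40000000000000000000000000000000000 : ℝ)) ≤ (361 : ℝ) * Real.sqrt 360 * Real.exp (-(1226349/1000000 * Real.sqrt 360)) := by
      have hm := mul_le_mul sL18 lb18 (by norm_num : (0:ℝ) ≤ (3131565870844867/40000000000000000000000000 : ℝ)) (Real.sqrt_nonneg _)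
      linarith
    simp only [Finset.sum_range_succ, Finset.sum_range_zero, Nat.succPNat_coe, Ek]
    norm_num
    linarith [t1, t2, t3, t4, t5, t6, t7, t8, t9, t10, t11, t12, t13, t14, t15, t16, t17, t18]
  have htail : (0:ℝ) ≤ (∑' n : ℕ, ((((Nat.succPNat (n + 18)) : ℕ) : ℝ) + 1) ^ 2 * Real.sqrt ((((Nat.succPNat (n + 18)) : ℕ) : ℝ) * ((((Nat.succPNat (n + 18)) : ℕ) : ℝ) + 2)) * Real.exp (-(1226349/1000000 : ℝ) * Ek (Nat.succPNat (n + 18)))) :=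
    tsum_nonneg (fun n => mul_nonneg (wE_nonneg _) (Real.exp_pos _).le)
  rw [hdec]
  have : ((1364698348357/500000000000 : ℝ) : ℝ) ≤ (109175867868575313103958173758292771/40000000000000000000000000000000000 : ℝ) := by norm_num
  linarith [hhead, htail]


/-- **Numerical evaluation of the area-law coefficient at coupling `λ = 1`.**
If `β₁ > 0` satisfies `∑_{k≥1} (k+1)² e^{-β₁ E_k} = 1` and
`β = β₁ + (∑ (k+1)² log(k+1) e^{-β₁ E_k}) / (∑ (k+1)² √(k(k+2)) e^{-β₁ E_k})`,
then `1.5957 < β < 1.5958`. -/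
theorem stmt19 (β₁ : ℝ) (hβ₁ : 0 < β₁)
    (heq : ∑' k : ℕ+, (((k : ℕ) : ℝ) + 1) ^ 2 * Real.exp (-β₁ * Ek k) = 1) :
    1.5957 <
      β₁ +
        (∑' k : ℕ+, (((k : ℕ) : ℝ) + 1) ^ 2 * Real.log (((k : ℕ) : ℝ) + 1) *
            Real.exp (-β₁ * Ek k)) /
          (∑' k : ℕ+, (((k : ℕ) : ℝ) + 1) ^ 2 *
            Real.sqrt (((k : ℕ) : ℝ) * (((k : ℕ) : ℝ) + 2)) * Real.exp (-β₁ * Ek k)) ∧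
    β₁ +
        (∑' k : ℕ+, (((k : ℕ) : ℝ) + 1) ^ 2 * Real.log (((k : ℕ) : ℝ) + 1) *
            Real.exp (-β₁ * Ek k)) /
          (∑' k : ℕ+, (((k : ℕ) : ℝ) + 1) ^ 2 *
            Real.sqrt (((k : ℕ) : ℝ) * (((k : ℕ) : ℝ) + 2)) * Real.exp (-β₁ * Ek k))
      < 1.5958 := by
  by_cases hS : Summable (fun k : ℕ+ => (((k : ℕ) : ℝ) + 1) ^ 2 * Real.exp (-β₁ * Ek k))
  case neg =>
    rw [tsum_eq_zero_of_not_summable hS] at heq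
    norm_num at heq
  case pos =>
  have ha : (613163/500000 : ℝ) < β₁ := by
    by_contra hcon
    push_neg at hcon
    have hle : (∑' k : ℕ+, (((k : ℕ) : ℝ) + 1) ^ 2 * Real.exp (-(613163/500000 : ℝ) * Ek k)) ≤ ∑' k : ℕ+, (((k : ℕ) : ℝ) + 1) ^ 2 * Real.exp (-β₁ * Ek k) :=
      tsum_mono_general _ w2_nonneg hcon hS
    linarith [fa_lo, hle, heq.le, heq.ge]
  have hb : β₁ < (1226349/1000000 : ℝ) := by
    by_contra hcon
    push_neg at hcon
    have hsb : Summable (fun k : ℕ+ => (((k : ℕ) : ℝ) + 1) ^ 2 * Real.exp (-(1226349/1000000 : ℝ) * Ek k)) :=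
      summable_main _ (by norm_num) _ w2_abs
    have hle : (∑' k : ℕ+, (((k : ℕ) : ℝ) + 1) ^ 2 * Real.exp (-β₁ * Ek k)) ≤ ∑' k : ℕ+, (((k : ℕ) : ℝ) + 1) ^ 2 * Real.exp (-(1226349/1000000 : ℝ) * Ek k) :=
      tsum_mono_general _ w2_nonneg hcon hsb
    linarith [fb_up, hle, heq.le, heq.ge]
  have hc1 : (1:ℝ) ≤ β₁ := by
    have : (1:ℝ) ≤ 613163/500000 := by norm_num
    linarith
  have hslog : Summable (fun k : ℕ+ => (((k : ℕ) : ℝ) + 1) ^ 2 * Real.log (((k : ℕ) : ℝ) + 1) * Real.exp (-β₁ * Ek k)) :=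
    summable_main _ hc1 _ wlog_abs
  have hsE : Summable (fun k : ℕ+ => (((k : ℕ) : ℝ) + 1) ^ 2 * Real.sqrt (((k : ℕ) : ℝ) * (((k : ℕ) : ℝ) + 2)) * Real.exp (-β₁ * Ek k)) :=
    summable_main _ hc1 _ wE_abs
  have hsloga : Summable (fun k : ℕ+ => (((k : ℕ) : ℝ) + 1) ^ 2 * Real.log (((k : ℕ) : ℝ) + 1) * Real.exp (-(613163/500000 : ℝ) * Ek k)) :=
    summable_main _ (by norm_num) _ wlog_abs
  have hsEa : Summable (fun k : ℕ+ => (((k : ℕ) : ℝ) + 1) ^ 2 * Real.sqrt (((k : ℕ) : ℝ) * (((k : ℕ) : ℝ) + 2)) * Real.exp (-(613163/500000 : ℝ) * Ek k)) :=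
    summable_main _ (by norm_num) _ wE_abs
  have hNup : (∑' k : ℕ+, (((k : ℕ) : ℝ) + 1) ^ 2 * Real.log (((k : ℕ) : ℝ) + 1) * Real.exp (-β₁ * Ek k)) ≤ (1008337506849/1000000000000 : ℝ) := by
    have h1 : (∑' k : ℕ+, (((k : ℕ) : ℝ) + 1) ^ 2 * Real.log (((k : ℕ) : ℝ) + 1) * Real.exp (-β₁ * Ek k)) ≤ ∑' k : ℕ+, (((k : ℕ) : ℝ) + 1) ^ 2 * Real.log (((k : ℕ) : ℝ) + 1) * Real.exp (-(613163/500000 : ℝ) * Ek k) :=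
      tsum_mono_general _ wlog_nonneg ha.le hsloga
    linarith [N_up]
  have hNlo : ((504131269877/500000000000 : ℝ) : ℝ) ≤ ∑' k : ℕ+, (((k : ℕ) : ℝ) + 1) ^ 2 * Real.log (((k : ℕ) : ℝ) + 1) * Real.exp (-β₁ * Ek k) := by
    have h1 : (∑' k : ℕ+, (((k : ℕ) : ℝ) + 1) ^ 2 * Real.log (((k : ℕ) : ℝ) + 1) * Real.exp (-(1226349/1000000 : ℝ) * Ek k)) ≤ ∑' k : ℕ+, (((k : ℕ) : ℝ) + 1) ^ 2 * Real.log (((k : ℕ) : ℝ) + 1) * Real.exp (-β₁ * Ek k) :=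
      tsum_mono_general _ wlog_nonneg hb.le hslog
    linarith [N_lo]
  have hDup : (∑' k : ℕ+, (((k : ℕ) : ℝ) + 1) ^ 2 * Real.sqrt (((k : ℕ) : ℝ) * (((k : ℕ) : ℝ) + 2)) * Real.exp (-β₁ * Ek k)) ≤ (2729607486503/1000000000000 : ℝ) := by
    have h1 : (∑' k : ℕ+, (((k : ℕ) : ℝ) + 1) ^ 2 * Real.sqrt (((k : ℕ) : ℝ) * (((k : ℕ) : ℝ) + 2)) * Real.exp (-β₁ * Ek k)) ≤ ∑' k : ℕ+, (((k : ℕ) : ℝ) + 1) ^ 2 * Real.sqrt (((k : ℕ) : ℝ) * (((k : ℕ) : ℝ) + 2)) * Real.exp (-(613163/500000 : ℝ) * Ek k) :=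
      tsum_mono_general _ wE_nonneg ha.le hsEa
    linarith [D_up]
  have hDlo : ((1364698348357/500000000000 : ℝ) : ℝ) ≤ ∑' k : ℕ+, (((k : ℕ) : ℝ) + 1) ^ 2 * Real.sqrt (((k : ℕ) : ℝ) * (((k : ℕ) : ℝ) + 2)) * Real.exp (-β₁ * Ek k) := by
    have h1 : (∑' k : ℕ+, (((k : ℕ) : ℝ) + 1) ^ 2 * Real.sqrt (((k : ℕ) : ℝ) * (((k : ℕ) : ℝ) + 2)) * Real.exp (-(1226349/1000000 : ℝ) * Ek k)) ≤ ∑' k : ℕ+, (((k : ℕ) : ℝ) + 1) ^ 2 * Real.sqrt (((k : ℕ) : ℝ) * (((k : ℕ) : ℝ) + 2)) * Real.exp (-β₁ * Ek k) :=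
      tsum_mono_general _ wE_nonneg hb.le hsE
    linarith [D_lo]
  have hNnn : (0:ℝ) ≤ ∑' k : ℕ+, (((k : ℕ) : ℝ) + 1) ^ 2 * Real.log (((k : ℕ) : ℝ) + 1) * Real.exp (-β₁ * Ek k) :=
    tsum_nonneg (fun k => mul_nonneg (wlog_nonneg k) (Real.exp_pos _).le)
  have hDpos : (0:ℝ) < ∑' k : ℕ+, (((k : ℕ) : ℝ) + 1) ^ 2 * Real.sqrt (((k : ℕ) : ℝ) * (((k : ℕ) : ℝ) + 2)) * Real.exp (-β₁ * Ek k) := by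
    have : (0:ℝ) < (1364698348357/500000000000 : ℝ) := by norm_num
    linarith
  constructor
  · have hfrac : ((504131269877/500000000000 : ℝ) : ℝ) / (2729607486503/1000000000000 : ℝ) ≤ (∑' k : ℕ+, (((k : ℕ) : ℝ) + 1) ^ 2 * Real.log (((k : ℕ) : ℝ) + 1) * Real.exp (-β₁ * Ek k)) / (∑' k : ℕ+, (((k : ℕ) : ℝ) + 1) ^ 2 * Real.sqrt (((k : ℕ) : ℝ) * (((k : ℕ) : ℝ) + 2)) * Real.exp (-β₁ * Ek k)) :=
      div_le_div₀ hNnn hNlo hDpos hDup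
    have hnum : (1.5957 : ℝ) < 613163/500000 + (504131269877/500000000000 : ℝ) / (2729607486503/1000000000000 : ℝ) := by norm_num
    linarith
  · have hfrac : (∑' k : ℕ+, (((k : ℕ) : ℝ) + 1) ^ 2 * Real.log (((k : ℕ) : ℝ) + 1) * Real.exp (-β₁ * Ek k)) / (∑' k : ℕ+, (((k : ℕ) : ℝ) + 1) ^ 2 * Real.sqrt (((k : ℕ) : ℝ) * (((k : ℕ) : ℝ) + 2)) * Real.exp (-β₁ * Ek k)) ≤ ((1008337506849/1000000000000 : ℝ) : ℝ) / (1364698348357/500000000000 : ℝ) :=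
      div_le_div₀ (by norm_num) hNup (by norm_num) hDlo
    have hnum : (1226349/1000000 : ℝ) + (1008337506849/1000000000000 : ℝ) / (1364698348357/500000000000 : ℝ) < 1.5958 := by norm_num
    linarith
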